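/- arXiv:1805.10083 — 2 statements merged into one kernel-verified Lean document; each statement's English description precedes it below -/
import Mathlib

section
/- For i = 1, ..., k, let T_i be a tree of order n_i and diameter d_i ≥ 2 with a single weight center w_i, and suppose each T_i satisfies rn(T_i) = (n_i - 1)(d_i + ε(T_i)) - 2L(T_i) + ε(T_i). Let T_{w_k} be the tree obtained by identifying the weight centers w_1, ..., w_k of T_1, ..., T_k with a single vertex w, and let d = diam(T_{w_k}). Then T_{w_k} satisfies rn(T_{w_k}) = (|V(T_{w_k})| - 1)(d + ε(T_{w_k})) - 2L(T_{w_k}) + ε(T_{w_k}), and rn(T_{w_k}) = Σ_{i=1}^{k} [rn(T_i) + (n_i - 1)(d - d_i)] - k + 1. -/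
namespace Radio

variable {V : Type*}

/-- The span of a labeling `f`: the maximum of `|f u - f v|` over all pairs of vertices. -/
def span [Fintype V] (f : V → ℕ) : ℕ :=
  Finset.univ.sup fun p : V × V => ((f p.1 : ℤ) - (f p.2 : ℤ)).natAbs

/-- `f` is a radio labeling of `G`: `|f u - f v| ≥ diam G + 1 - d(u,v)` for all distinct `u, v`. -/
def IsRadioLabeling [Fintype V] (G : SimpleGraph V) (f : V → ℕ) : Prop :=
  ∀ u v : V, u ≠ v → G.diam + 1 ≤ G.dist u v + ((f u : ℤ) - (f v : ℤ)).natAbs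

/-- The radio number of `G`: the minimum span of a radio labeling of `G`. -/
noncomputable def radioNumber [Fintype V] (G : SimpleGraph V) : ℕ :=
  sInf { n | ∃ f : V → ℕ, IsRadioLabeling G f ∧ span f = n }

/-- The weight of `G` from a vertex `v`: `w_G(v) = ∑_u d(u, v)`. -/
noncomputable def weightFrom [Fintype V] (G : SimpleGraph V) (v : V) : ℕ :=
  ∑ u : V, G.dist u v

/-- The weight of `G`: the minimum of `w_G(v)` over all vertices `v`. -/
noncomputable def weight [Fintype V] (G : SimpleGraph V) : ℕ :=
  sInf (Set.range (weightFrom G))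

/-- The set of weight centers of `G`: vertices minimizing `w_G(·)`. -/
def weightCenters [Fintype V] (G : SimpleGraph V) : Set V :=
  { v | ∀ x : V, weightFrom G v ≤ weightFrom G x }

/-- The level of a vertex `u`: `L(u) = min { d(u, x) : x ∈ W(G) }`. -/
noncomputable def level [Fintype V] (G : SimpleGraph V) (u : V) : ℕ :=
  sInf (G.dist u '' weightCenters G)

/-- The total level of `G`: `L(G) = ∑_u L(u)`. -/
noncomputable def totalLevel [Fintype V] (G : SimpleGraph V) : ℕ :=
  ∑ u : V, level G u

/-- `ε(G) = 1` if `G` has exactly one weight center, and `0` otherwise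
(for a tree the other case is exactly that of two adjacent weight centers). -/
noncomputable def epsilon [Fintype V] (G : SimpleGraph V) : ℕ :=
  if (weightCenters G).ncard = 1 then 1 else 0

open SimpleGraph

lemma ediam_ne_top [Fintype V] {G : SimpleGraph V} (hc : G.Connected) : G.ediam ≠ ⊤ := by
  have : Nonempty V := hc.nonempty
  obtain ⟨u, v, h⟩ := exists_edist_eq_ediam_of_finite (G := G)
  rw [← h]
  exact edist_ne_top_iff_reachable.mpr (hc u v)

lemma dist_le_diam' [Fintype V] {G : SimpleGraph V} (hc : G.Connected) (u v : V) :
    G.dist u v ≤ G.diam :=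
  SimpleGraph.dist_le_diam (ediam_ne_top hc)

lemma le_span [Fintype V] (f : V → ℕ) (u v : V) :
    ((f u : ℤ) - (f v : ℤ)).natAbs ≤ span f :=
  Finset.le_sup (f := fun p : V × V => ((f p.1 : ℤ) - (f p.2 : ℤ)).natAbs)
    (Finset.mem_univ (u, v))

lemma span_le {V : Type*} [Fintype V] {f : V → ℕ} {m : ℕ}
    (h : ∀ u v : V, ((f u : ℤ) - (f v : ℤ)).natAbs ≤ m) : span f ≤ m :=
  Finset.sup_le fun p _ => h p.1 p.2

lemma radio_injective [Fintype V] {G : SimpleGraph V} (hc : G.Connected) {f : V → ℕ}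
    (hf : IsRadioLabeling G f) : Function.Injective f := by
  intro u v huv
  by_contra hne
  have h1 := hf u v hne
  have h2 : ((f u : ℤ) - (f v : ℤ)).natAbs = 0 := by rw [huv]; simp
  have h3 := dist_le_diam' hc u v
  omega

lemma exists_sorted_equiv [Fintype V] {f : V → ℕ} (hf : Function.Injective f) :
    ∃ e : Fin (Fintype.card V) ≃ V, StrictMono fun t => f (e t) := by
  classical
  set s : Finset ℕ := Finset.univ.image f with hs
  have hcard : s.card = Fintype.card V := by
    rw [hs, Finset.card_image_of_injective _ hf, Finset.card_univ]
  set o := s.orderIsoOfFin hcard with ho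
  have hmem : ∀ t, ∃ v, f v = (o t : ℕ) := by
    intro t
    have h2 : (o t : ℕ) ∈ Finset.univ.image f := (o t).2
    simpa using Finset.mem_image.mp h2
  choose e he using hmem
  refine ⟨Equiv.ofBijective e ⟨?_, ?_⟩, ?_⟩
  · intro a b hab
    have : (o a : ℕ) = (o b : ℕ) := by rw [← he, ← he, hab]
    exact o.injective (Subtype.ext this)
  · intro v
    have hv : f v ∈ s := by rw [hs]; exact Finset.mem_image_of_mem f (Finset.mem_univ v)
    refine ⟨o.symm ⟨f v, hv⟩, ?_⟩
    apply hf
    rw [he]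
    simp
  · intro a b hab
    simp only [Equiv.ofBijective_apply]
    change f (e a) < f (e b)
    rw [he, he]
    exact o.strictMono hab

/-- The key counting estimate: for a sorted enumeration, the span is at least the telescoping
sum, bounded below by levels. Returns the sorted equiv plus all the inequalities. -/
lemma radio_sorted [Fintype V] {G : SimpleGraph V} (hc : G.Connected) (c : V)
    (hn : 2 ≤ Fintype.card V) {f : V → ℕ} (hf : IsRadioLabeling G f) :
    ∃ e : Fin (Fintype.card V) ≃ V, (StrictMono fun t => f (e t)) ∧
      ∀ x : ℕ → V, (∀ (t : ℕ) (ht : t < Fintype.card V), x t = e ⟨t, ht⟩) →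
      ((∑ t ∈ Finset.range (Fintype.card V - 1),
            ((G.diam : ℤ) + 1 - G.dist (x t) c - G.dist (x (t+1)) c)
        = ((Fintype.card V : ℤ) - 1) * (G.diam + 1)
          - 2 * (∑ u : V, (G.dist u c : ℤ))
          + G.dist (x 0) c + G.dist (x (Fintype.card V - 1)) c) ∧
      (∑ t ∈ Finset.range (Fintype.card V - 1), ((f (x (t+1)) : ℤ) - (f (x t) : ℤ))
          = (f (x (Fintype.card V - 1)) : ℤ) - f (x 0)) ∧
      (∑ t ∈ Finset.range (Fintype.card V - 1), ((f (x (t+1)) : ℤ) - (f (x t) : ℤ))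
          ≤ span f) ∧
      (∀ t : ℕ, t + 1 < Fintype.card V →
        (G.diam : ℤ) + 1 - G.dist (x t) (x (t+1)) ≤ (f (x (t+1)) : ℤ) - f (x t)) ∧
      (∀ t : ℕ, t + 1 < Fintype.card V →
        (G.dist (x t) (x (t+1)) : ℤ) ≤ G.dist (x t) c + G.dist (x (t+1)) c) ∧
      (1 : ℤ) ≤ G.dist (x 0) c + G.dist (x (Fintype.card V - 1)) c) := by
  obtain ⟨e, he⟩ := exists_sorted_equiv (radio_injective hc hf)
  obtain ⟨m, hm⟩ : ∃ m, Fintype.card V = m + 1 := ⟨Fintype.card V - 1, by omega⟩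
  refine ⟨e, he, ?_⟩
  intro x hx
  have hm1 : 1 ≤ m := by omega
  have hmono : ∀ s t : ℕ, s < t → t < Fintype.card V → (f (x s) : ℤ) < f (x t) := by
    intro s t hst htn
    have hs : s < Fintype.card V := by omega
    rw [hx s hs, hx t htn]
    exact_mod_cast he (show (⟨s, hs⟩ : Fin (Fintype.card V)) < ⟨t, htn⟩ from hst)
  have hgap : ∀ t : ℕ, t + 1 < Fintype.card V →
      (G.diam : ℤ) + 1 - G.dist (x t) (x (t+1)) ≤ (f (x (t+1)) : ℤ) - f (x t) := by
    intro t ht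
    have hlt := hmono t (t+1) (by omega) ht
    have hne : x t ≠ x (t+1) := by
      intro h; rw [h] at hlt; exact lt_irrefl _ hlt
    have h1 := hf (x (t+1)) (x t) hne.symm
    have h2 : ((f (x (t+1)) : ℤ) - (f (x t) : ℤ)).natAbs = f (x (t+1)) - f (x t) := by
      omega
    rw [h2] at h1
    rw [SimpleGraph.dist_comm] at h1
    have : (f (x t) : ℤ) ≤ f (x (t+1)) := le_of_lt hlt
    omega
  have htri : ∀ t : ℕ, t + 1 < Fintype.card V →
      (G.dist (x t) (x (t+1)) : ℤ) ≤ G.dist (x t) c + G.dist (x (t+1)) c := by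
    intro t ht
    have := hc.dist_triangle (u := x t) (v := c) (w := x (t+1))
    rw [SimpleGraph.dist_comm (u := c)] at this
    exact_mod_cast this
  have htel : ∑ t ∈ Finset.range (Fintype.card V - 1), ((f (x (t+1)) : ℤ) - (f (x t) : ℤ))
      = (f (x (Fintype.card V - 1)) : ℤ) - f (x 0) := by
    rw [Finset.sum_range_sub (f := fun t => (f (x t) : ℤ))]
  have hfirstlast : (f (x 0) : ℤ) < f (x (Fintype.card V - 1)) :=
    hmono 0 (Fintype.card V - 1) (by omega) (by omega)
  have hspan2 : ∑ t ∈ Finset.range (Fintype.card V - 1), ((f (x (t+1)) : ℤ) - (f (x t) : ℤ))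
      ≤ span f := by
    rw [htel]
    have h1 := le_span f (x (Fintype.card V - 1)) (x 0)
    omega
  have hsum_all : ∑ t ∈ Finset.range (Fintype.card V), (G.dist (x t) c : ℤ)
      = ∑ u : V, (G.dist u c : ℤ) := by
    rw [← Fin.sum_univ_eq_sum_range (f := fun t => (G.dist (x t) c : ℤ))]
    rw [← Equiv.sum_comp e (fun v => (G.dist v c : ℤ))]
    apply Finset.sum_congr rfl
    intro t _
    rw [hx t t.isLt]
  have hlvl0 : (1 : ℤ) ≤ G.dist (x 0) c + G.dist (x (Fintype.card V - 1)) c := by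
    by_contra h
    push_neg at h
    have h0 : G.dist (x 0) c = 0 := by omega
    have h1 : G.dist (x (Fintype.card V - 1)) c = 0 := by omega
    have e0 : x 0 = c := (hc.dist_eq_zero_iff).mp h0
    have e1 : x (Fintype.card V - 1) = c := (hc.dist_eq_zero_iff).mp h1
    rw [e0, e1] at hfirstlast
    exact lt_irrefl _ hfirstlast
  refine ⟨?_, htel, hspan2, hgap, htri, hlvl0⟩
  rw [Finset.sum_sub_distrib, Finset.sum_sub_distrib]
  have c2 : ∑ t ∈ Finset.range (Fintype.card V - 1), (G.dist (x t) c : ℤ)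
      = ∑ u : V, (G.dist u c : ℤ) - G.dist (x (Fintype.card V - 1)) c := by
    rw [← hsum_all, hm]
    simp only [Nat.add_sub_cancel]
    rw [Finset.sum_range_succ (f := fun t => (G.dist (x t) c : ℤ))]
    ring
  have c3 : ∑ t ∈ Finset.range (Fintype.card V - 1), (G.dist (x (t+1)) c : ℤ)
      = ∑ u : V, (G.dist u c : ℤ) - G.dist (x 0) c := by
    rw [← hsum_all, hm]
    simp only [Nat.add_sub_cancel]
    rw [Finset.sum_range_succ' (f := fun t => (G.dist (x t) c : ℤ))]
    ring
  rw [c2, c3, Finset.sum_const, Finset.card_range, hm]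
  push_cast
  ring

lemma radioSet_nonempty [Fintype V] (G : SimpleGraph V) :
    { n | ∃ f : V → ℕ, IsRadioLabeling G f ∧ span f = n }.Nonempty := by
  classical
  set f : V → ℕ := fun v => (Fintype.equivFin V v : ℕ) * (G.diam + 1) with hf
  refine ⟨span f, f, ?_, rfl⟩
  intro u v huv
  have hne : (Fintype.equivFin V u : ℕ) ≠ (Fintype.equivFin V v : ℕ) := by
    simp only [ne_eq, Fin.val_eq_val, EmbeddingLike.apply_eq_iff_eq]
    exact huv
  have key : (G.diam + 1 : ℕ) ≤ ((f u : ℤ) - (f v : ℤ)).natAbs := by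
    have e1 : ((f u : ℤ) - (f v : ℤ)) =
        (((Fintype.equivFin V u : ℕ) : ℤ) - ((Fintype.equivFin V v : ℕ) : ℤ)) * (G.diam + 1) := by
      push_cast [hf]; ring
    rw [e1, Int.natAbs_mul]
    have h1 : 1 ≤ (((Fintype.equivFin V u : ℕ) : ℤ) - ((Fintype.equivFin V v : ℕ) : ℤ)).natAbs := by
      omega
    have h2 : ((G.diam : ℤ) + 1).natAbs = G.diam + 1 := by omega
    calc G.diam + 1 = 1 * (G.diam + 1) := by omega
    _ ≤ (((Fintype.equivFin V u : ℕ) : ℤ) - ((Fintype.equivFin V v : ℕ) : ℤ)).natAbs *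
        ((G.diam : ℤ) + 1).natAbs := by rw [h2]; exact Nat.mul_le_mul_right _ h1
  omega

lemma radioNumber_spec {V : Type*} [Fintype V] (G : SimpleGraph V) :
    ∃ f : V → ℕ, IsRadioLabeling G f ∧ span f = radioNumber G :=
  Nat.sInf_mem (radioSet_nonempty G)

lemma radioNumber_le_span {V : Type*} [Fintype V] {G : SimpleGraph V} {f : V → ℕ}
    (hf : IsRadioLabeling G f) : radioNumber G ≤ span f :=
  Nat.sInf_le ⟨f, hf, rfl⟩


lemma span_congr {V : Type*} [Fintype V] {f g : V → ℕ}
    (h : ∀ u v : V, ((f u : ℤ) - f v).natAbs = ((g u : ℤ) - g v).natAbs) :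
    span f = span g := by
  unfold span
  apply Finset.sup_congr rfl
  intro p _
  exact h p.1 p.2

lemma radio_tight {V : Type*} [Fintype V] {G : SimpleGraph V} (hc : G.Connected) (c : V)
    (hn : 2 ≤ Fintype.card V) {f : V → ℕ} (hf : IsRadioLabeling G f)
    (hspan : (span f : ℤ) ≤ ((Fintype.card V : ℤ) - 1) * (G.diam + 1)
        - 2 * (∑ u : V, (G.dist u c : ℤ)) + 1) :
    ∃ e : Fin (Fintype.card V) ≃ V, (StrictMono fun t => f (e t)) ∧
      ∀ x : ℕ → V, (∀ (t : ℕ) (ht : t < Fintype.card V), x t = e ⟨t, ht⟩) →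
      (G.dist (x 0) c + G.dist (x (Fintype.card V - 1)) c = 1) ∧
      (∀ t : ℕ, t + 1 < Fintype.card V →
        G.dist (x t) (x (t+1)) = G.dist (x t) c + G.dist (x (t+1)) c) ∧
      (∀ t : ℕ, t + 1 < Fintype.card V →
        (f (x (t+1)) : ℤ) - f (x t)
          = (G.diam : ℤ) + 1 - G.dist (x t) c - G.dist (x (t+1)) c) := by
  obtain ⟨e, he, hkey⟩ := radio_sorted hc c hn hf
  refine ⟨e, he, ?_⟩
  intro x hx
  obtain ⟨hC, hA, hAspan, hgap, htri, hlvl⟩ := hkey x hx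
  -- pointwise inequalities
  have hpt : ∀ t ∈ Finset.range (Fintype.card V - 1),
      (G.diam : ℤ) + 1 - G.dist (x t) c - G.dist (x (t+1)) c
        ≤ (f (x (t+1)) : ℤ) - (f (x t) : ℤ) := by
    intro t ht
    rw [Finset.mem_range] at ht
    have h1 := hgap t (by omega)
    have h2 := htri t (by omega)
    omega
  have hsumle := Finset.sum_le_sum hpt
  -- squeeze
  have hok : (1 : ℤ) ≤ G.dist (x 0) c + G.dist (x (Fintype.card V - 1)) c := hlvl
  have hsq : ∑ t ∈ Finset.range (Fintype.card V - 1),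
      ((G.diam : ℤ) + 1 - G.dist (x t) c - G.dist (x (t+1)) c)
      = ∑ t ∈ Finset.range (Fintype.card V - 1), ((f (x (t+1)) : ℤ) - (f (x t) : ℤ)) := by
    have h2 : ∑ t ∈ Finset.range (Fintype.card V - 1), ((f (x (t+1)) : ℤ) - (f (x t) : ℤ))
        ≤ ∑ t ∈ Finset.range (Fintype.card V - 1),
          ((G.diam : ℤ) + 1 - G.dist (x t) c - G.dist (x (t+1)) c) := by
      rw [hC]
      omega
    omega
  have heq := (Finset.sum_eq_sum_iff_of_le hpt).mp hsq
  have hend : G.dist (x 0) c + G.dist (x (Fintype.card V - 1)) c = 1 := by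
    have h2 : ∑ t ∈ Finset.range (Fintype.card V - 1), ((f (x (t+1)) : ℤ) - (f (x t) : ℤ))
        ≤ ((Fintype.card V : ℤ) - 1) * (G.diam + 1)
          - 2 * (∑ u : V, (G.dist u c : ℤ)) + 1 := by omega
    rw [← hsq, hC] at h2
    have : (G.dist (x 0) c : ℤ) + G.dist (x (Fintype.card V - 1)) c ≤ 1 := by omega
    omega
  refine ⟨hend, ?_, ?_⟩
  · intro t ht
    have h1 := heq t (Finset.mem_range.mpr (by omega))
    have h2 := hgap t ht
    have h3 := htri t ht
    omega
  · intro t ht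
    have h1 := heq t (Finset.mem_range.mpr (by omega))
    omega


lemma radio_force {V : Type*} [Fintype V] {G : SimpleGraph V} (hc : G.Connected) (c : V)
    (hn : 2 ≤ Fintype.card V)
    (hrn : (radioNumber G : ℤ) = ((Fintype.card V : ℤ) - 1) * (G.diam + 1)
        - 2 * (∑ u : V, (G.dist u c : ℤ)) + 1) :
    ∃ (x : ℕ → V) (f : V → ℕ),
      IsRadioLabeling G f ∧
      x 0 = c ∧
      G.dist (x (Fintype.card V - 1)) c = 1 ∧
      (∀ t : ℕ, t + 1 < Fintype.card V →
        G.dist (x t) (x (t+1)) = G.dist (x t) c + G.dist (x (t+1)) c) ∧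
      (∀ t : ℕ, t + 1 < Fintype.card V →
        (f (x (t+1)) : ℤ) - f (x t)
          = (G.diam : ℤ) + 1 - G.dist (x t) c - G.dist (x (t+1)) c) ∧
      (∀ g : V → ℤ, ∑ t ∈ Finset.range (Fintype.card V), g (x t) = ∑ v : V, g v) ∧
      (∀ s t : ℕ, s < t → t < Fintype.card V → x s ≠ x t) := by
  obtain ⟨f₀, hf₀, hs₀⟩ := radioNumber_spec G
  have hspan₀ : (span f₀ : ℤ) ≤ ((Fintype.card V : ℤ) - 1) * (G.diam + 1)
      - 2 * (∑ u : V, (G.dist u c : ℤ)) + 1 := by rw [hs₀, hrn]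
  -- we first produce a suitable pair (f, e) with e 0 = c
  have main : ∃ (f : V → ℕ) (e : Fin (Fintype.card V) ≃ V), IsRadioLabeling G f ∧
      (StrictMono fun t => f (e t)) ∧
      (∀ x : ℕ → V, (∀ (t : ℕ) (ht : t < Fintype.card V), x t = e ⟨t, ht⟩) →
        (G.dist (x 0) c + G.dist (x (Fintype.card V - 1)) c = 1) ∧
        (∀ t : ℕ, t + 1 < Fintype.card V →
          G.dist (x t) (x (t+1)) = G.dist (x t) c + G.dist (x (t+1)) c) ∧
        (∀ t : ℕ, t + 1 < Fintype.card V →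
          (f (x (t+1)) : ℤ) - f (x t)
            = (G.diam : ℤ) + 1 - G.dist (x t) c - G.dist (x (t+1)) c)) ∧
      G.dist (e ⟨0, by omega⟩) c = 0 := by
    obtain ⟨e, he, hprop⟩ := radio_tight hc c hn hf₀ hspan₀
    set x : ℕ → V := fun t => e ⟨min t (Fintype.card V - 1), by omega⟩ with hxdef
    have hx : ∀ (t : ℕ) (ht : t < Fintype.card V), x t = e ⟨t, ht⟩ := by
      intro t ht
      simp only [hxdef]
      congr 1
      apply Fin.ext
      simp
      omega
    obtain ⟨hend, hd, hg⟩ := hprop x hx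
    by_cases h0 : G.dist (x 0) c = 0
    · refine ⟨f₀, e, hf₀, he, hprop, ?_⟩
      rw [← hx 0 (by omega)]
      exact h0
    · -- reverse the labeling
      have hlast0 : G.dist (x (Fintype.card V - 1)) c = 0 := by omega
      have hxlastc : x (Fintype.card V - 1) = c := hc.dist_eq_zero_iff.mp hlast0
      set M := f₀ (x (Fintype.card V - 1)) with hM
      have hle : ∀ v : V, f₀ v ≤ M := by
        intro v
        obtain ⟨t, ht⟩ := e.surjective v
        rw [← ht, hM, hx (Fintype.card V - 1) (by omega)]
        have : t ≤ (⟨Fintype.card V - 1, by omega⟩ : Fin (Fintype.card V)) := by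
          rw [Fin.le_def]
          simp
          omega
        exact he.monotone this
      set f' : V → ℕ := fun v => M - f₀ v with hf'def
      have hdiff : ∀ u v : V, (f' u : ℤ) - f' v = (f₀ v : ℤ) - f₀ u := by
        intro u v
        simp only [hf'def]
        have h1 := hle u
        have h2 := hle v
        push_cast [Nat.cast_sub h1, Nat.cast_sub h2]
        ring
      have habs : ∀ u v : V, ((f' u : ℤ) - f' v).natAbs = ((f₀ u : ℤ) - f₀ v).natAbs := by
        intro u v
        rw [hdiff]
        omega
      have hf' : IsRadioLabeling G f' := by
        intro u v huv
        rw [habs]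
        exact hf₀ u v huv
      have hspan' : span f' = span f₀ := span_congr (fun u v => by rw [habs])
      obtain ⟨e₂, he₂, hprop₂⟩ := radio_tight hc c hn hf' (by rw [hspan']; exact hspan₀)
      refine ⟨f', e₂, hf', he₂, hprop₂, ?_⟩
      -- e₂ 0 is the minimizer of f', which is x (card - 1) = c
      have hmin : ∀ v : V, f' (e₂ ⟨0, by omega⟩) ≤ f' v := by
        intro v
        obtain ⟨t, ht⟩ := e₂.surjective v
        rw [← ht]
        apply he₂.monotone
        rw [Fin.le_def]
        simp
      have hzero : f' (x (Fintype.card V - 1)) = 0 := by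
        simp only [hf'def]
        omega
      have h1 : f' (e₂ ⟨0, by omega⟩) = 0 := by
        have := hmin (x (Fintype.card V - 1))
        omega
      have hinj' : Function.Injective f' := radio_injective hc hf'
      have : e₂ ⟨0, by omega⟩ = x (Fintype.card V - 1) := by
        apply hinj'
        rw [hzero, h1]
      rw [this, hxlastc]
      exact hc.dist_eq_zero_iff.mpr rfl
  obtain ⟨f, e, hf, he, hprop, h0⟩ := main
  set x : ℕ → V := fun t => e ⟨min t (Fintype.card V - 1), by omega⟩ with hxdef
  have hx : ∀ (t : ℕ) (ht : t < Fintype.card V), x t = e ⟨t, ht⟩ := by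
    intro t ht
    simp only [hxdef]
    congr 1
    apply Fin.ext
    simp
    omega
  obtain ⟨hend, hd, hg⟩ := hprop x hx
  have hx0 : x 0 = c := by
    rw [hx 0 (by omega)]
    apply hc.dist_eq_zero_iff.mp
    convert h0 using 3
  refine ⟨x, f, hf, hx0, ?_, hd, hg, ?_, ?_⟩
  · have : G.dist (x 0) c = 0 := by rw [hx0]; exact hc.dist_eq_zero_iff.mpr rfl
    omega
  · intro g
    rw [← Fin.sum_univ_eq_sum_range (f := fun t => g (x t))]
    rw [← Equiv.sum_comp e g]
    apply Finset.sum_congr rfl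
    intro t _
    rw [hx t t.isLt]
  · intro s t hst ht
    rw [hx s (by omega), hx t ht]
    intro hcon
    have := e.injective hcon
    simp only [Fin.mk.injEq] at this
    omega


section Walks

lemma lipschitz_le_walk {B : Type*} {G' : SimpleGraph B} (δ : B → ℕ)
    (h : ∀ x y : B, G'.Adj x y → δ y ≤ δ x + 1) {x y : B} (p : G'.Walk x y) :
    δ y ≤ δ x + p.length := by
  induction p with
  | nil => simp
  | @cons a b c hab p ih =>
    have := h a b hab
    simp only [SimpleGraph.Walk.length_cons]
    omega

lemma dist_map_le_walk {A B : Type*} {G : SimpleGraph A} (hG : G.Connected)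
    {G' : SimpleGraph B} (ρ : B → A)
    (h : ∀ x y : B, G'.Adj x y → G.dist (ρ x) (ρ y) ≤ 1) {x y : B} (p : G'.Walk x y) :
    G.dist (ρ x) (ρ y) ≤ p.length := by
  induction p with
  | nil => simp
  | @cons a b c hab p ih =>
    have h1 := h a b hab
    have h2 := hG.dist_triangle (u := ρ a) (v := ρ b) (w := ρ c)
    simp only [SimpleGraph.Walk.length_cons]
    omega

end Walks

section Glue

variable {k : ℕ} {V : Fin k → Type*} [∀ i, Fintype (V i)]
  {T : ∀ i, SimpleGraph (V i)} {w : ∀ i, V i}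
  {W : Type*} [Fintype W] {H : SimpleGraph W} {w₀ : W} {φ : ∀ i, V i → W}

set_option linter.unusedSectionVars false

/-- The inclusion of a part as a graph homomorphism. -/
def glueHom (hAdj : ∀ x y : W, H.Adj x y ↔ ∃ i a b, φ i a = x ∧ φ i b = y ∧ (T i).Adj a b)
    (i : Fin k) : T i →g H where
  toFun := φ i
  map_rel' := fun {a b} h => (hAdj _ _).mpr ⟨i, a, b, rfl, rfl, h⟩

lemma glue_connected
    (hTree : ∀ i, (T i).IsTree)
    (hbase : ∀ i, φ i (w i) = w₀)
    (hcover : ∀ x : W, ∃ i v, φ i v = x)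
    (hAdj : ∀ x y : W, H.Adj x y ↔ ∃ i a b, φ i a = x ∧ φ i b = y ∧ (T i).Adj a b) :
    H.Connected := by
  have hne : Nonempty W := ⟨w₀⟩
  rw [SimpleGraph.connected_iff]
  refine ⟨?_, hne⟩
  have hw : ∀ x : W, H.Reachable x w₀ := by
    intro x
    obtain ⟨i, v, rfl⟩ := hcover x
    have := (hTree i).isConnected v (w i)
    have := this.map (glueHom hAdj i)
    rw [show (glueHom hAdj i) (w i) = w₀ from hbase i] at this
    exact this
  intro x y
  exact (hw x).trans (hw y).symm

lemma glue_dist_part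
    (hTree : ∀ i, (T i).IsTree)
    (hinj : ∀ i, Function.Injective (φ i))
    (hbase : ∀ i, φ i (w i) = w₀)
    (hcover : ∀ x : W, ∃ i v, φ i v = x)
    (hmeet : ∀ i j, i ≠ j → ∀ a b, φ i a = φ j b → φ i a = w₀)
    (hAdj : ∀ x y : W, H.Adj x y ↔ ∃ i a b, φ i a = x ∧ φ i b = y ∧ (T i).Adj a b)
    (i : Fin k) (a b : V i) :
    H.dist (φ i a) (φ i b) = (T i).dist a b := by
  classical
  have hconnH := glue_connected hTree hbase hcover hAdj
  apply le_antisymm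
  · obtain ⟨p, hp⟩ := ((hTree i).isConnected a b).exists_walk_length_eq_dist
    have := SimpleGraph.dist_le (p.map (glueHom hAdj i))
    rwa [SimpleGraph.Walk.length_map, hp] at this
  · set ρ : W → V i := fun x => if h : ∃ v, φ i v = x then h.choose else w i with hρ
    have hρφ : ∀ v : V i, ρ (φ i v) = v := by
      intro v
      have hex : ∃ u, φ i u = φ i v := ⟨v, rfl⟩
      simp only [hρ, dif_pos hex]
      exact hinj i hex.choose_spec
    have hρw : ∀ (j : Fin k) (c : V j), j ≠ i → ρ (φ j c) = w i := by
      intro j c hji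
      by_cases hex : ∃ v, φ i v = φ j c
      · have h1 : φ i hex.choose = w₀ := hmeet i j (fun h => hji h.symm) hex.choose c hex.choose_spec
        have h2 : hex.choose = w i := hinj i (by rw [h1, hbase])
        simp only [hρ, dif_pos hex, h2]
      · simp only [hρ, dif_neg hex]
    have hlip : ∀ x y : W, H.Adj x y → (T i).dist (ρ x) (ρ y) ≤ 1 := by
      intro x y hxy
      obtain ⟨j, c, d, rfl, rfl, hcd⟩ := (hAdj _ _).mp hxy
      by_cases hji : j = i
      · subst hji
        rw [hρφ, hρφ]
        rw [SimpleGraph.dist_eq_one_iff_adj.mpr hcd]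
      · rw [hρw j c hji, hρw j d hji, SimpleGraph.dist_self]
        omega
    obtain ⟨p, hp⟩ := (hconnH (φ i a) (φ i b)).exists_walk_length_eq_dist
    have := dist_map_le_walk (hTree i).isConnected ρ hlip p
    rwa [hρφ, hρφ, hp] at this

open Classical in
/-- The level of a vertex of the glued graph inside its own part. -/
noncomputable def partLevel {k : ℕ} {V : Fin k → Type*} (T : ∀ i, SimpleGraph (V i))
    (w : ∀ i, V i) {W : Type*} (φ : ∀ i, V i → W) : W → ℕ := fun x =>
  if h : ∃ p, ∃ v : V p, φ p v = x then (T h.choose).dist h.choose_spec.choose (w h.choose)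
  else 0

lemma partLevel_eq
    (hinj : ∀ i, Function.Injective (φ i))
    (hbase : ∀ i, φ i (w i) = w₀)
    (hmeet : ∀ i j, i ≠ j → ∀ a b, φ i a = φ j b → φ i a = w₀)
    (p : Fin k) (v : V p) :
    partLevel T w φ (φ p v) = (T p).dist v (w p) := by
  classical
  have hex : ∃ q, ∃ u : V q, φ q u = φ p v := ⟨p, v, rfl⟩
  rw [partLevel, dif_pos hex]
  have key : ∀ (q : Fin k) (u : V q), φ q u = φ p v →
      (T q).dist u (w q) = (T p).dist v (w p) := by
    intro q u hu
    by_cases hqp : q = p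
    · subst hqp
      rw [hinj q hu]
    · have h1 : φ q u = w₀ := hmeet q p hqp u v hu
      have h2 : u = w q := hinj q (by rw [h1, hbase])
      have h3 : φ p v = w₀ := by rw [← hu, h1]
      have h4 : v = w p := hinj p (by rw [h3, hbase])
      rw [h2, h4, SimpleGraph.dist_self, SimpleGraph.dist_self]
  exact key _ _ hex.choose_spec.choose_spec

open Classical in
/-- Auxiliary Lipschitz potential used to bound cross-part distances from below. -/
noncomputable def glueDelta {k : ℕ} {V : Fin k → Type*} (T : ∀ i, SimpleGraph (V i))
    (w : ∀ i, V i) {W : Type*} (φ : ∀ i, V i → W) (i : Fin k) (a : V i) : W → ℕ := fun x =>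
  if h : ∃ v, φ i v = x then (T i).dist a h.choose
  else (T i).dist a (w i) + partLevel T w φ x

lemma glue_dist_cross
    (hTree : ∀ i, (T i).IsTree)
    (hinj : ∀ i, Function.Injective (φ i))
    (hbase : ∀ i, φ i (w i) = w₀)
    (hcover : ∀ x : W, ∃ i v, φ i v = x)
    (hmeet : ∀ i j, i ≠ j → ∀ a b, φ i a = φ j b → φ i a = w₀)
    (hAdj : ∀ x y : W, H.Adj x y ↔ ∃ i a b, φ i a = x ∧ φ i b = y ∧ (T i).Adj a b)
    {i j : Fin k} (hij : i ≠ j) (a : V i) (b : V j) :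
    H.dist (φ i a) (φ j b) = (T i).dist a (w i) + (T j).dist b (w j) := by
  classical
  have hconnH := glue_connected hTree hbase hcover hAdj
  have hpart := glue_dist_part hTree hinj hbase hcover hmeet hAdj
  by_cases hb : b = w j
  · subst hb
    rw [show φ j (w j) = φ i (w i) by rw [hbase, hbase], hpart]
    simp
  by_cases ha : a = w i
  · subst ha
    rw [show φ i (w i) = φ j (w j) by rw [hbase, hbase], hpart, SimpleGraph.dist_comm]
    simp
  -- neither is the center
  apply le_antisymm
  · have h1 := hconnH.dist_triangle (u := φ i a) (v := w₀) (w := φ j b)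
    rw [show w₀ = φ i (w i) from (hbase i).symm] at h1
    nth_rewrite 2 [show φ i (w i) = φ j (w j) by rw [hbase, hbase]] at h1
    rw [hpart i, hpart j] at h1
    rwa [SimpleGraph.dist_comm (G := T j)] at h1
  · -- Lipschitz function argument
    set δ : W → ℕ := glueDelta T w φ i a with hδ
    have hδin : ∀ v : V i, δ (φ i v) = (T i).dist a v := by
      intro v
      have hex : ∃ u, φ i u = φ i v := ⟨v, rfl⟩
      simp only [hδ, glueDelta, dif_pos hex]
      rw [hinj i hex.choose_spec]
    have hδout : ∀ (p : Fin k) (v : V p), p ≠ i → v ≠ w p →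
        δ (φ p v) = (T i).dist a (w i) + (T p).dist v (w p) := by
      intro p v hpi hvw
      have hnex : ¬ ∃ u, φ i u = φ p v := by
        intro hex
        have h1 : φ i hex.choose = w₀ := hmeet i p (fun h => hpi h.symm) hex.choose v hex.choose_spec
        have h2 : φ p v = w₀ := by rw [← hex.choose_spec, h1]
        exact hvw (hinj p (by rw [h2, hbase]))
      simp only [hδ, glueDelta, dif_neg hnex]
      rw [partLevel_eq hinj hbase hmeet]
    have hlip : ∀ x y : W, H.Adj x y → δ y ≤ δ x + 1 := by
      intro x y hxy
      obtain ⟨p, c, d, rfl, rfl, hcd⟩ := (hAdj _ _).mp hxy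
      by_cases hpi : p = i
      · subst hpi
        rw [hδin, hδin]
        have htri := (hTree p).isConnected.dist_triangle (u := a) (v := c) (w := d)
        rw [SimpleGraph.dist_eq_one_iff_adj.mpr hcd] at htri
        omega
      · by_cases hc : c = w p
        · subst hc
          rw [show φ p (w p) = φ i (w i) by rw [hbase, hbase], hδin]
          have hd : d ≠ w p := fun h => (T p).irrefl (h ▸ hcd)
          rw [hδout p d hpi hd]
          have hdd : (T p).dist d (w p) = 1 :=
            SimpleGraph.dist_eq_one_iff_adj.mpr ((T p).adj_symm hcd)
          omega
        · by_cases hd : d = w p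
          · subst hd
            rw [show φ p (w p) = φ i (w i) by rw [hbase, hbase], hδin, hδout p c hpi hc]
            omega
          · rw [hδout p c hpi hc, hδout p d hpi hd]
            have htri := (hTree p).isConnected.dist_triangle (u := d) (v := c) (w := w p)
            rw [SimpleGraph.dist_comm (u := d) (v := c),
              SimpleGraph.dist_eq_one_iff_adj.mpr hcd] at htri
            omega
    obtain ⟨q, hq⟩ := (hconnH (φ i a) (φ j b)).exists_walk_length_eq_dist
    have h1 := lipschitz_le_walk δ hlip q
    rw [hδin a, SimpleGraph.dist_self, hδout j b (fun h => hij h.symm) hb, hq] at h1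
    omega

lemma glue_sum {M : Type*} [AddCommGroup M]
    (hinj : ∀ i, Function.Injective (φ i))
    (hbase : ∀ i, φ i (w i) = w₀)
    (hcover : ∀ x : W, ∃ i v, φ i v = x)
    (hmeet : ∀ i j, i ≠ j → ∀ a b, φ i a = φ j b → φ i a = w₀)
    (F : W → M) :
    ∑ x : W, F x = F w₀ + ∑ i, ((∑ b : V i, F (φ i b)) - F w₀) := by
  classical
  have hpartsum : ∀ i, ∑ b ∈ Finset.univ.erase (w i), F (φ i b)
      = (∑ b : V i, F (φ i b)) - F w₀ := by
    intro i
    have h2 : ∑ b ∈ Finset.univ.erase (w i), F (φ i b) + F w₀ = ∑ b : V i, F (φ i b) := by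
      rw [← hbase i]
      exact Finset.sum_erase_add Finset.univ _ (Finset.mem_univ (w i))
    rw [← h2]
    abel
  have huniv : (Finset.univ : Finset W)
      = insert w₀ (Finset.univ.biUnion fun i => (Finset.univ.erase (w i)).image (φ i)) := by
    apply Finset.ext
    intro x
    constructor
    · intro _
      by_cases hx : x = w₀
      · exact Finset.mem_insert.mpr (Or.inl hx)
      · obtain ⟨i, v, rfl⟩ := hcover x
        refine Finset.mem_insert.mpr (Or.inr ?_)
        refine Finset.mem_biUnion.mpr ⟨i, Finset.mem_univ i, ?_⟩
        refine Finset.mem_image.mpr ⟨v, ?_, rfl⟩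
        refine Finset.mem_erase.mpr ⟨?_, Finset.mem_univ v⟩
        intro h
        exact hx (by rw [h, hbase])
    · intro _
      exact Finset.mem_univ x
  have hnotmem : w₀ ∉ Finset.univ.biUnion fun i => (Finset.univ.erase (w i)).image (φ i) := by
    intro hmem
    obtain ⟨i, _, hx⟩ := Finset.mem_biUnion.mp hmem
    obtain ⟨v, hv, hveq⟩ := Finset.mem_image.mp hx
    exact (Finset.mem_erase.mp hv).1 (hinj i (by rw [hveq, hbase]))
  rw [huniv, Finset.sum_insert hnotmem, Finset.sum_biUnion]
  · congr 1
    apply Finset.sum_congr rfl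
    intro i _
    rw [Finset.sum_image (fun a _ b _ hab => hinj i hab)]
    exact hpartsum i
  · intro i _ j _ hij
    simp only [Function.onFun]
    rw [Finset.disjoint_left]
    intro x hxi hxj
    obtain ⟨ai, hai, haieq⟩ := Finset.mem_image.mp hxi
    obtain ⟨aj, haj, hajeq⟩ := Finset.mem_image.mp hxj
    have heq : φ i ai = φ j aj := by rw [haieq, hajeq]
    have h1 : φ i ai = w₀ := hmeet i j hij ai aj heq
    exact (Finset.mem_erase.mp hai).1 (hinj i (by rw [h1, hbase]))

end Glue


lemma radio_lower_bound {V : Type*} [Fintype V] {G : SimpleGraph V} (hc : G.Connected) (c : V)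
    (hn : 2 ≤ Fintype.card V) :
    ((Fintype.card V : ℤ) - 1) * (G.diam + 1) - 2 * (∑ u : V, (G.dist u c : ℤ)) + 1
      ≤ (radioNumber G : ℤ) := by
  obtain ⟨f, hf, hs⟩ := radioNumber_spec G
  rw [← hs]
  obtain ⟨e, he, hkey⟩ := radio_sorted hc c hn hf
  set x : ℕ → V := fun t => e ⟨min t (Fintype.card V - 1), by omega⟩ with hxdef
  have hx : ∀ (t : ℕ) (ht : t < Fintype.card V), x t = e ⟨t, ht⟩ := by
    intro t ht
    simp only [hxdef]
    congr 1
    apply Fin.ext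
    simp
    omega
  obtain ⟨hC, hA, hAspan, hgap, htri, hlvl⟩ := hkey x hx
  have hpt : ∀ t ∈ Finset.range (Fintype.card V - 1),
      (G.diam : ℤ) + 1 - G.dist (x t) c - G.dist (x (t+1)) c
        ≤ (f (x (t+1)) : ℤ) - (f (x t) : ℤ) := by
    intro t ht
    rw [Finset.mem_range] at ht
    have h1 := hgap t (by omega)
    have h2 := htri t (by omega)
    omega
  have hsumle := Finset.sum_le_sum hpt
  rw [hC] at hsumle
  omega

set_option maxHeartbeats 3000000

/-- For `i = 1, …, k`, let `T i` be a tree of order `n i` and diameter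
`d i ≥ 2` with a single weight center `w i`, each attaining the lower bound
`rn(T i) = (n i - 1)(d i + ε(T i)) - 2 L(T i) + ε(T i)`. Let `H = T_{w_k}` be the tree
obtained by identifying the weight centers `w 1, …, w k` into a single vertex `w₀`
(described here by injections `φ i : T i → H` whose images cover `H`, meet pairwise only
in `w₀`, and carry exactly the edges of `H`). Then `H` also attains the lower bound, and
`rn(H) = ∑ i [rn(T i) + (n i - 1)(d - d i)] - k + 1`, where `d = diam H`. -/
theorem radioNumber_glue_weightCenters {k : ℕ} (hk : 1 ≤ k)
    {V : Fin k → Type*} [∀ i, Fintype (V i)]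
    (T : ∀ i, SimpleGraph (V i)) (w : ∀ i, V i)
    (hTree : ∀ i, (T i).IsTree)
    (hdiam : ∀ i, 2 ≤ (T i).diam)
    (hWC : ∀ i, weightCenters (T i) = {w i})
    (hrn : ∀ i, (radioNumber (T i) : ℤ) =
      ((Fintype.card (V i) : ℤ) - 1) * (((T i).diam : ℤ) + (epsilon (T i) : ℤ))
        - 2 * (totalLevel (T i) : ℤ) + (epsilon (T i) : ℤ))
    {W : Type*} [Fintype W]
    (H : SimpleGraph W) (w₀ : W) (φ : ∀ i, V i → W)
    (hinj : ∀ i, Function.Injective (φ i))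
    (hbase : ∀ i, φ i (w i) = w₀)
    (hcover : ∀ x : W, ∃ i v, φ i v = x)
    (hmeet : ∀ i j, i ≠ j → ∀ a b, φ i a = φ j b → φ i a = w₀)
    (hAdj : ∀ x y : W, H.Adj x y ↔ ∃ i a b, φ i a = x ∧ φ i b = y ∧ (T i).Adj a b) :
    (radioNumber H : ℤ) =
        ((Fintype.card W : ℤ) - 1) * ((H.diam : ℤ) + (epsilon H : ℤ))
          - 2 * (totalLevel H : ℤ) + (epsilon H : ℤ) ∧
    (radioNumber H : ℤ) =
        (∑ i, ((radioNumber (T i) : ℤ)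
          + ((Fintype.card (V i) : ℤ) - 1) * ((H.diam : ℤ) - ((T i).diam : ℤ))))
          - (k : ℤ) + 1 := by
  classical
  have hconn : ∀ i, (T i).Connected := fun i => (hTree i).isConnected
  have hconnH : H.Connected := glue_connected hTree hbase hcover hAdj
  have hpart : ∀ (i : Fin k) (a b : V i), H.dist (φ i a) (φ i b) = (T i).dist a b :=
    glue_dist_part hTree hinj hbase hcover hmeet hAdj
  have hcross : ∀ {i j : Fin k}, i ≠ j → ∀ (a : V i) (b : V j),
      H.dist (φ i a) (φ j b) = (T i).dist a (w i) + (T j).dist b (w j) :=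
    fun hij a b => glue_dist_cross hTree hinj hbase hcover hmeet hAdj hij a b
  have hn2 : ∀ i, 2 ≤ Fintype.card (V i) := by
    intro i
    have hnt : Nontrivial (V i) := SimpleGraph.nontrivial_of_diam_ne_zero (G := T i) (by
      have := hdiam i; omega)
    exact Fintype.one_lt_card
  have hNW2 : 2 ≤ Fintype.card W := by
    have i0 : Fin k := ⟨0, hk⟩
    have hnt : Nontrivial (V i0) := SimpleGraph.nontrivial_of_diam_ne_zero (G := T i0) (by
      have := hdiam i0; omega)
    obtain ⟨a, b, hab⟩ := hnt.exists_pair_ne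
    have : φ i0 a ≠ φ i0 b := fun h => hab (hinj i0 h)
    have : Nontrivial W := ⟨_, _, this⟩
    exact Fintype.one_lt_card
  have hdD : ∀ i, (T i).diam ≤ H.diam := by
    intro i
    have : Nonempty (V i) := (hconn i).nonempty
    obtain ⟨a, b, hab⟩ := SimpleGraph.exists_dist_eq_diam (G := T i)
    calc (T i).diam = H.dist (φ i a) (φ i b) := by rw [hpart, hab]
    _ ≤ H.diam := dist_le_diam' hconnH _ _
  have hD2 : 2 ≤ H.diam := le_trans (hdiam ⟨0, hk⟩) (hdD ⟨0, hk⟩)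
  have hdistD : ∀ z z' : W, H.dist z z' ≤ H.diam := dist_le_diam' hconnH
  have hdistd : ∀ (i : Fin k) (a b : V i), (T i).dist a b ≤ (T i).diam :=
    fun i => dist_le_diam' (hconn i)
  have hlevφ : ∀ (i : Fin k) (v : V i), H.dist (φ i v) w₀ = (T i).dist v (w i) := by
    intro i v
    rw [← hbase i, hpart]
  -- the unique weight center of `H` is `w₀`
  have hwfT : ∀ (j : Fin k) (a : V j), a ≠ w j →
      weightFrom (T j) (w j) < weightFrom (T j) a := by
    intro j a ha
    have hmem : ∀ x : V j, x ∈ weightCenters (T j) ↔ x = w j := by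
      intro x
      rw [hWC j]
      rfl
    have h1 : ∀ x, weightFrom (T j) (w j) ≤ weightFrom (T j) x := (hmem (w j)).mpr rfl
    have h2 : ¬ ∀ x, weightFrom (T j) a ≤ weightFrom (T j) x := fun h => ha ((hmem a).mp h)
    push_neg at h2
    obtain ⟨y, hy⟩ := h2
    exact lt_of_le_of_lt (h1 y) hy
  have hwfH : ∀ z : W, z ≠ w₀ → weightFrom H w₀ < weightFrom H z := by
    intro z hz
    obtain ⟨j, a, rfl⟩ := hcover z
    have ha : a ≠ w j := fun h => hz (by rw [h, hbase])
    have h1 : (weightFrom H (φ j a) : ℤ) = (H.dist w₀ (φ j a) : ℤ)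
        + ∑ i, ((∑ b : V i, (H.dist (φ i b) (φ j a) : ℤ)) - (H.dist w₀ (φ j a) : ℤ)) := by
      rw [weightFrom]
      push_cast
      exact glue_sum hinj hbase hcover hmeet _
    have h2 : (weightFrom H w₀ : ℤ) = ∑ i, ∑ b : V i, (H.dist (φ i b) w₀ : ℤ) := by
      rw [weightFrom]
      push_cast
      rw [glue_sum hinj hbase hcover hmeet (fun u => (H.dist u w₀ : ℤ))]
      rw [SimpleGraph.dist_self]
      simp
    set ℓa : ℤ := ((T j).dist a (w j) : ℤ) with hℓa
    have hw0a : (H.dist w₀ (φ j a) : ℤ) = ℓa := by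
      rw [SimpleGraph.dist_comm, hlevφ j a]
    have hdiffpt : ∀ i : Fin k,
        (∑ b : V i, (H.dist (φ i b) w₀ : ℤ))
          + (if i = j then 1 - ℓa else 0)
        ≤ (∑ b : V i, (H.dist (φ i b) (φ j a) : ℤ)) - (H.dist w₀ (φ j a) : ℤ) := by
      intro i
      by_cases hij : i = j
      · subst hij
        rw [if_pos rfl, hw0a]
        have e1 : ∀ b : V i, (H.dist (φ i b) (φ i a) : ℤ) = ((T i).dist b a : ℤ) := by
          intro b
          rw [hpart]
        have e2 : ∀ b : V i, (H.dist (φ i b) w₀ : ℤ) = ((T i).dist b (w i) : ℤ) := by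
          intro b
          rw [hlevφ]
        rw [Finset.sum_congr rfl fun b _ => e1 b, Finset.sum_congr rfl fun b _ => e2 b]
        have h3 : weightFrom (T i) (w i) + 1 ≤ weightFrom (T i) a := hwfT i a ha
        have h4 : (weightFrom (T i) a : ℤ) = ∑ b : V i, ((T i).dist b a : ℤ) := by
          rw [weightFrom]; push_cast; rfl
        have h5 : (weightFrom (T i) (w i) : ℤ) = ∑ b : V i, ((T i).dist b (w i) : ℤ) := by
          rw [weightFrom]; push_cast; rfl
        have h6 : (weightFrom (T i) (w i) : ℤ) + 1 ≤ (weightFrom (T i) a : ℤ) := by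
          exact_mod_cast h3
        omega
      · rw [if_neg hij, hw0a]
        have e1 : ∀ b : V i, (H.dist (φ i b) (φ j a) : ℤ)
            = ((T i).dist b (w i) : ℤ) + ℓa := by
          intro b
          rw [hcross hij b a, hℓa]
          push_cast
          ring
        have e2 : ∀ b : V i, (H.dist (φ i b) w₀ : ℤ) = ((T i).dist b (w i) : ℤ) := by
          intro b
          rw [hlevφ]
        rw [Finset.sum_congr rfl fun b _ => e1 b, Finset.sum_congr rfl fun b _ => e2 b]
        rw [Finset.sum_add_distrib, Finset.sum_const, Finset.card_univ, nsmul_eq_mul]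
        have hc2 : 2 ≤ Fintype.card (V i) := hn2 i
        have hl0 : (0 : ℤ) ≤ ℓa := by rw [hℓa]; positivity
        have h7 : (1 : ℤ) ≤ (Fintype.card (V i) : ℤ) := by exact_mod_cast Nat.one_le_of_lt hc2
        have h8 : 0 ≤ ((Fintype.card (V i) : ℤ) - 1) * ℓa := mul_nonneg (by omega) hl0
        linarith
    have hsum2 := Finset.sum_le_sum (fun i (_ : i ∈ Finset.univ) => hdiffpt i)
    rw [Finset.sum_add_distrib, Finset.sum_ite_eq' Finset.univ j (fun _ => 1 - ℓa)] at hsum2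
    simp only [Finset.mem_univ, if_pos] at hsum2
    simp only [hw0a] at h1 hsum2
    have hfin : (weightFrom H w₀ : ℤ) < (weightFrom H (φ j a) : ℤ) := by
      rw [h1, h2]
      omega
    exact_mod_cast hfin
  have hWCH : weightCenters H = {w₀} := by
    apply Set.eq_of_subset_of_subset
    · intro v hv
      simp only [weightCenters, Set.mem_setOf_eq] at hv
      rw [Set.mem_singleton_iff]
      by_contra hne
      have h1 := hwfH v hne
      have h2 : weightFrom H v ≤ weightFrom H w₀ := hv w₀
      omega
    · intro v hv
      rw [Set.mem_singleton_iff] at hv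
      simp only [weightCenters, Set.mem_setOf_eq]
      intro z
      by_cases hz : z = w₀
      · rw [hv, hz]
      · rw [hv]
        exact le_of_lt (hwfH z hz)
  have hepsH : epsilon H = 1 := by
    rw [epsilon, hWCH, if_pos (Set.ncard_singleton w₀)]
  have hlevelH : ∀ u : W, level H u = H.dist u w₀ := by
    intro u
    rw [level, hWCH, Set.image_singleton, csInf_singleton]
  have htotH : (totalLevel H : ℤ) = ∑ u : W, (H.dist u w₀ : ℤ) := by
    rw [totalLevel]
    push_cast
    exact Finset.sum_congr rfl fun u _ => by rw [hlevelH]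
  have heps : ∀ i, epsilon (T i) = 1 := by
    intro i
    rw [epsilon, hWC i, if_pos (Set.ncard_singleton (w i))]
  have hlevT : ∀ (i : Fin k) (u : V i), level (T i) u = (T i).dist u (w i) := by
    intro i u
    rw [level, hWC i, Set.image_singleton, csInf_singleton]
  have htotT : ∀ i, (totalLevel (T i) : ℤ) = ∑ u : V i, ((T i).dist u (w i) : ℤ) := by
    intro i
    rw [totalLevel]
    push_cast
    exact Finset.sum_congr rfl fun u _ => by rw [hlevT]
  have hcard : (Fintype.card W : ℤ) = 1 + ∑ i, ((Fintype.card (V i) : ℤ) - 1) := by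
    have h1 := glue_sum (M := ℤ) hinj hbase hcover hmeet (fun _ => (1 : ℤ))
    simpa using h1
  have hLsum : ∑ u : W, (H.dist u w₀ : ℤ) = ∑ i, ∑ b : V i, ((T i).dist b (w i) : ℤ) := by
    have h1 := glue_sum (M := ℤ) hinj hbase hcover hmeet (fun z => (H.dist z w₀ : ℤ))
    rw [h1, SimpleGraph.dist_self]
    push_cast
    rw [Finset.sum_congr rfl (fun i _ => by
      rw [Finset.sum_congr rfl (fun b _ => by rw [hlevφ i b])])]
    simp
  have hrnT : ∀ i, (radioNumber (T i) : ℤ) = ((Fintype.card (V i) : ℤ) - 1) * ((T i).diam + 1)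
      - 2 * (∑ u : V i, ((T i).dist u (w i) : ℤ)) + 1 := by
    intro i
    rw [hrn i, heps i, htotT i]
    push_cast
    ring
  -- forced optimal orderings of the parts
  choose x f hrad hx0 hxm hdx hgx hsumx hxinj using
    fun i => radio_force (hconn i) (w i) (hn2 i) (hrnT i)
  -- the building blocks of the labeling of `H`
  set m : Fin k → ℕ := fun i => Fintype.card (V i) - 1 with hm
  set g : Fin k → ℕ → ℤ := fun i b => ∑ q ∈ Finset.range b,
    ((H.diam : ℤ) + 1 - (T i).dist (x i q) (w i) - (T i).dist (x i (q+1)) (w i)) with hg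
  set C : ℕ → ℤ := fun j => ∑ p ∈ Finset.range j,
    (if h : p < k then g ⟨p, h⟩ (m ⟨p, h⟩) - 1 else 0) with hC
  have hmn : ∀ i, m i + 1 = Fintype.card (V i) := by
    intro i
    have := hn2 i
    simp only [hm]
    omega
  -- the gap terms
  set gap : Fin k → ℕ → ℤ := fun i q =>
    (H.diam : ℤ) + 1 - (T i).dist (x i q) (w i) - (T i).dist (x i (q+1)) (w i) with hgap
  have hgdef : ∀ i b, g i b = ∑ q ∈ Finset.range b, gap i q := fun i b => rfl
  have hgapf : ∀ (i : Fin k) (q : ℕ), q + 1 ≤ m i →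
      gap i q = ((f i (x i (q+1)) : ℤ) - f i (x i q)) + ((H.diam : ℤ) - (T i).diam) := by
    intro i q hq
    have h1 := hgx i q (by have := hmn i; omega)
    simp only [hgap]
    rw [h1]
    ring
  have hgapge : ∀ (i : Fin k) (q : ℕ), q + 1 ≤ m i →
      1 + ((H.diam : ℤ) - (T i).diam) ≤ gap i q := by
    intro i q hq
    rw [hgapf i q hq]
    have h1 := hgx i q (by have := hmn i; omega)
    have h2 := hdx i q (by have := hmn i; omega)
    have h3 := hdistd i (x i q) (x i (q+1))
    have h4 : ((T i).dist (x i q) (x i (q+1)) : ℤ) ≤ (T i).diam := by exact_mod_cast h3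
    omega
  have hgK3 : ∀ (i : Fin k) (b : ℕ), b ≤ m i →
      g i b = ((f i (x i b) : ℤ) - f i (x i 0)) + (b : ℤ) * ((H.diam : ℤ) - (T i).diam) := by
    intro i b
    induction b with
    | zero => intro _; simp [hgdef]
    | succ c ih =>
      intro hb
      have hc := ih (by omega)
      rw [hgdef] at hc ⊢
      rw [Finset.sum_range_succ, hc, hgapf i c hb]
      push_cast
      ring
  have hgdiff : ∀ (i : Fin k) (b c : ℕ), b ≤ c → c ≤ m i →
      g i c - g i b = ∑ q ∈ Finset.Ico b c, gap i q := by
    intro i b c hbc hc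
    rw [hgdef, hgdef, Finset.sum_Ico_eq_sub _ hbc]
  have hgmono : ∀ (i : Fin k) (b c : ℕ), b ≤ c → c ≤ m i → g i b ≤ g i c := by
    intro i b c hbc hc
    have h1 := hgdiff i b c hbc hc
    have h2 : (0 : ℤ) ≤ ∑ q ∈ Finset.Ico b c, gap i q := by
      apply Finset.sum_nonneg
      intro q hq
      rw [Finset.mem_Ico] at hq
      have := hgapge i q (by omega)
      have hDd' : ((T i).diam : ℤ) ≤ H.diam := by exact_mod_cast hdD i
      omega
    omega
  have hg0 : ∀ i, g i 0 = 0 := by intro i; simp [hgdef]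
  have hgnn : ∀ (i : Fin k) (b : ℕ), b ≤ m i → 0 ≤ g i b := by
    intro i b hb
    have := hgmono i 0 b (by omega) hb
    rw [hg0] at this
    exact this
  have hfmono : ∀ (i : Fin k) (b c : ℕ), b < c → c ≤ m i →
      (f i (x i b) : ℤ) < f i (x i c) := by
    intro i b c hbc hc
    have h1 := hgdiff i b c (by omega) hc
    have h2 : ((c : ℤ) - b) * (1 + ((H.diam : ℤ) - (T i).diam))
        ≤ ∑ q ∈ Finset.Ico b c, gap i q := by
      have h3 : ∀ q ∈ Finset.Ico b c, 1 + ((H.diam : ℤ) - (T i).diam) ≤ gap i q := by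
        intro q hq
        rw [Finset.mem_Ico] at hq
        exact hgapge i q (by omega)
      have h4 := Finset.sum_le_sum h3
      rw [Finset.sum_const, Nat.card_Ico, nsmul_eq_mul] at h4
      have h5 : ((c - b : ℕ) : ℤ) = (c : ℤ) - b := by push_cast; omega
      rw [h5] at h4
      exact h4
    have h6 := hgK3 i b (by omega)
    have h7 := hgK3 i c hc
    have hcb1 : (1 : ℤ) ≤ (c : ℤ) - b := by push_cast; omega
    have hDd' : ((T i).diam : ℤ) ≤ H.diam := by exact_mod_cast hdD i
    nlinarith
  have hxne : ∀ (i : Fin k) (b c : ℕ), b < c → c ≤ m i → x i b ≠ x i c := by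
    intro i b c hbc hc
    exact hxinj i b c hbc (by have := hmn i; omega)
  have hradio_g : ∀ (i : Fin k) (b c : ℕ), b < c → c ≤ m i →
      (H.diam : ℤ) + 1 - (T i).dist (x i b) (x i c) ≤ g i c - g i b := by
    intro i b c hbc hc
    have hmono := hfmono i b c hbc hc
    have hne := hxne i b c hbc hc
    have hr := hrad i (x i c) (x i b) (fun h => hne h.symm)
    have habs : ((f i (x i c) : ℤ) - f i (x i b)).natAbs
        = f i (x i c) - f i (x i b) := by omega
    rw [habs] at hr
    rw [SimpleGraph.dist_comm] at hr
    have h6 := hgK3 i b (by omega)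
    have h7 := hgK3 i c hc
    have hcb1 : (1 : ℤ) ≤ (c : ℤ) - b := by push_cast; omega
    have hDd' : ((T i).diam : ℤ) ≤ H.diam := by exact_mod_cast hdD i
    have hmono' : f i (x i b) < f i (x i c) := by exact_mod_cast hmono
    have hr' : ((T i).diam : ℤ) + 1 ≤ ((T i).dist (x i b) (x i c) : ℤ)
        + ((f i (x i c) : ℤ) - f i (x i b)) := by omega
    nlinarith
  have hghead : ∀ (i : Fin k) (b : ℕ), 1 ≤ b → b ≤ m i →
      (H.diam : ℤ) + 1 - (T i).dist (x i b) (w i) ≤ g i b := by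
    intro i b hb1 hb
    have h1 := hradio_g i 0 b (by omega) hb
    rw [hg0, hx0 i] at h1
    rw [SimpleGraph.dist_comm] at h1
    omega
  have htail : ∀ (i : Fin k) (b : ℕ), b < m i →
      (H.diam : ℤ) - (T i).dist (x i b) (w i) ≤ g i (m i) - g i b := by
    intro i b hb
    have h1 := hradio_g i b (m i) hb (le_refl _)
    have h2 := (hconn i).dist_triangle (u := x i b) (v := w i) (w := x i (m i))
    have h3 : (T i).dist (w i) (x i (m i)) = 1 := by
      rw [SimpleGraph.dist_comm]
      exact hxm i
    rw [h3] at h2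
    have h2' : ((T i).dist (x i b) (x i (m i)) : ℤ)
        ≤ ((T i).dist (x i b) (w i) : ℤ) + 1 := by exact_mod_cast h2
    omega
  have hgm_ge_D : ∀ i, (H.diam : ℤ) ≤ g i (m i) := by
    intro i
    have h1 := hghead i (m i) (by have := hn2 i; simp only [hm]; omega) (le_refl _)
    rw [hxm i] at h1
    omega
  have hgm_eval : ∀ i, g i (m i) = (m i : ℤ) * ((H.diam : ℤ) + 1)
      - 2 * (∑ b : V i, ((T i).dist b (w i) : ℤ)) + 1 := by
    intro i
    have hLx : ∑ t ∈ Finset.range (Fintype.card (V i)), ((T i).dist (x i t) (w i) : ℤ)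
        = ∑ b : V i, ((T i).dist b (w i) : ℤ) :=
      hsumx i (fun v => ((T i).dist v (w i) : ℤ))
    have e1 : ∑ q ∈ Finset.range (m i), ((T i).dist (x i q) (w i) : ℤ)
        = ∑ b : V i, ((T i).dist b (w i) : ℤ) - 1 := by
      rw [← hLx, ← hmn i, Finset.sum_range_succ]
      rw [hxm i]
      push_cast
      ring
    have e2 : ∑ q ∈ Finset.range (m i), ((T i).dist (x i (q+1)) (w i) : ℤ)
        = ∑ b : V i, ((T i).dist b (w i) : ℤ) := by
      rw [← hLx, ← hmn i, Finset.sum_range_succ' (fun t => ((T i).dist (x i t) (w i) : ℤ))]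
      rw [hx0 i, SimpleGraph.dist_self]
      push_cast
      ring
    rw [hgdef]
    simp only [hgap]
    rw [Finset.sum_sub_distrib, Finset.sum_sub_distrib, e1, e2, Finset.sum_const,
      Finset.card_range, nsmul_eq_mul]
    push_cast
    ring
  -- facts about the offsets C
  have hterm_nn : ∀ p : ℕ, 0 ≤ (if h : p < k then g ⟨p, h⟩ (m ⟨p, h⟩) - 1 else 0) := by
    intro p
    by_cases h : p < k
    · rw [dif_pos h]
      have := hgm_ge_D ⟨p, h⟩
      have : (2 : ℤ) ≤ H.diam := by exact_mod_cast hD2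
      omega
    · rw [dif_neg h]
  have hCmono : ∀ a b : ℕ, a ≤ b → C a ≤ C b := by
    intro a b hab
    rw [hC]
    apply Finset.sum_le_sum_of_subset_of_nonneg
    · exact Finset.range_subset_range.mpr hab
    · intro p _ _
      exact hterm_nn p
  have hCstep : ∀ (p : ℕ) (h : p < k), C (p+1) = C p + (g ⟨p, h⟩ (m ⟨p, h⟩) - 1) := by
    intro p h
    simp only [hC]
    rw [Finset.sum_range_succ, dif_pos h]
  have hC0 : C 0 = 0 := by rw [hC]; simp
  have hCnn : ∀ j, 0 ≤ C j := by
    intro j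
    have := hCmono 0 j (by omega)
    rw [hC0] at this
    exact this
  -- positions of vertices in the orderings
  have hsurjx : ∀ (i : Fin k) (v : V i), ∃ t, t < Fintype.card (V i) ∧ x i t = v := by
    intro i v
    have hbij : Function.Bijective (fun t : Fin (Fintype.card (V i)) => x i t.val) := by
      rw [Fintype.bijective_iff_injective_and_card]
      constructor
      · intro s t hst
        by_contra hne
        rcases Nat.lt_or_ge s.val t.val with h | h
        · exact hxinj i s.val t.val h t.isLt hst
        · have hlt : t.val < s.val := by
            rcases Nat.lt_or_ge t.val s.val with h2 | h2
            · exact h2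
            · exact absurd (Fin.ext (by omega)) hne
          exact hxinj i t.val s.val hlt s.isLt hst.symm
      · simp
    obtain ⟨t, ht⟩ := hbij.surjective v
    exact ⟨t.val, t.isLt, ht⟩
  choose pos hposlt hposx using hsurjx
  have hpos_eq : ∀ (i : Fin k) (t : ℕ), t < Fintype.card (V i) → pos i (x i t) = t := by
    intro i t ht
    by_contra hne
    rcases Nat.lt_or_ge (pos i (x i t)) t with h | h
    · exact hxinj i (pos i (x i t)) t h ht (hposx i (x i t))
    · have hlt : t < pos i (x i t) := by omega
      exact hxinj i t (pos i (x i t)) hlt (hposlt i (x i t)) (hposx i (x i t)).symm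
  have hpos0 : ∀ i, pos i (w i) = 0 := by
    intro i
    have := hpos_eq i 0 (by have := hn2 i; omega)
    rw [hx0 i] at this
    exact this
  have hpos_ge1 : ∀ (i : Fin k) (v : V i), v ≠ w i → 1 ≤ pos i v := by
    intro i v hv
    by_contra h
    have h0 : pos i v = 0 := by omega
    have := hposx i v
    rw [h0, hx0 i] at this
    exact hv this.symm
  have hpos_le : ∀ (i : Fin k) (v : V i), pos i v ≤ m i := by
    intro i v
    have := hposlt i v
    have := hmn i
    omega
  -- the labeling of H (as an integer-valued function)
  have hcover' := hcover
  choose pa va hpava using hcover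
  set fz : W → ℤ := fun z => if z = w₀ then 0
    else C (pa z).val + g (pa z) (pos (pa z) (va z)) with hfz
  have hfzw0 : fz w₀ = 0 := by rw [hfz]; simp
  have hφne : ∀ (i : Fin k) (v : V i), v ≠ w i → φ i v ≠ w₀ := by
    intro i v hv h
    exact hv (hinj i (by rw [h, hbase]))
  have hrep : ∀ (z : W) (i : Fin k) (v : V i), z ≠ w₀ → φ i v = z →
      fz z = C i.val + g i (pos i v) := by
    intro z i v hz hzeq
    rw [hfz]
    simp only
    rw [if_neg hz]
    by_cases hppi : pa z = i
    · subst hppi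
      have hva : va z = v := hinj (pa z) (by rw [hpava z, hzeq])
      rw [hva]
    · exfalso
      have h1 : φ (pa z) (va z) = φ i v := by rw [hpava z, hzeq]
      have h2 := hmeet (pa z) i hppi (va z) v h1
      rw [hpava z] at h2
      exact hz h2
  have hfzφ : ∀ (i : Fin k) (v : V i), v ≠ w i →
      fz (φ i v) = C i.val + g i (pos i v) :=
    fun i v hv => hrep (φ i v) i v (hφne i v hv) rfl
  have hfz_nn : ∀ z, 0 ≤ fz z := by
    intro z
    by_cases hz : z = w₀
    · rw [hz, hfzw0]
    · obtain ⟨i, v, rfl⟩ := hcover' z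
      have hv : v ≠ w i := fun h => hz (by rw [h, hbase])
      rw [hfzφ i v hv]
      have := hCnn i.val
      have := hgnn i (pos i v) (hpos_le i v)
      omega
  have hfz_le : ∀ z, fz z ≤ C k + 1 := by
    intro z
    by_cases hz : z = w₀
    · rw [hz, hfzw0]
      have := hCnn k
      omega
    · obtain ⟨i, v, rfl⟩ := hcover' z
      have hv : v ≠ w i := fun h => hz (by rw [h, hbase])
      rw [hfzφ i v hv]
      have h1 : g i (pos i v) ≤ g i (m i) := hgmono i (pos i v) (m i) (hpos_le i v) (le_refl _)
      have h2 : C i.val + g i (m i) = C (i.val + 1) + 1 := by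
        rw [hCstep i.val i.isLt]
        simp only [Fin.eta]
        ring
      have h3 : C (i.val + 1) ≤ C k := hCmono _ _ i.isLt
      omega
  -- the three kinds of label-difference estimates
  have hdistw0 : ∀ (j : Fin k) (v : V j), H.dist w₀ (φ j v) = (T j).dist v (w j) := by
    intro j v
    rw [SimpleGraph.dist_comm]
    exact hlevφ j v
  have hcase_w0 : ∀ (j : Fin k) (v' : V j), v' ≠ w j →
      (H.diam : ℤ) + 1 ≤ H.dist w₀ (φ j v') + fz (φ j v') := by
    intro j v' hv'
    rw [hfzφ j v' hv', hdistw0 j v']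
    have h1 := hghead j (pos j v') (hpos_ge1 j v' hv') (hpos_le j v')
    rw [hposx j v'] at h1
    have := hCnn j.val
    omega
  have hcase_same : ∀ (i : Fin k) (v v' : V i), v ≠ w i → v' ≠ w i → pos i v < pos i v' →
      (H.diam : ℤ) + 1 ≤ H.dist (φ i v) (φ i v') + (fz (φ i v') - fz (φ i v)) := by
    intro i v v' hv hv' hlt
    rw [hfzφ i v hv, hfzφ i v' hv', hpart i v v']
    have h1 := hradio_g i (pos i v) (pos i v') hlt (hpos_le i v')
    rw [hposx i v, hposx i v'] at h1
    omega
  have hcase_cross : ∀ (i j : Fin k) (v : V i) (v' : V j), i.val < j.val → v ≠ w i →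
      v' ≠ w j →
      (H.diam : ℤ) + 1 ≤ H.dist (φ i v) (φ j v') + (fz (φ j v') - fz (φ i v)) := by
    intro i j v v' hij hv hv'
    have hijne : i ≠ j := fun h => by rw [h] at hij; omega
    rw [hfzφ i v hv, hfzφ j v' hv', hcross hijne v v']
    have hstep := hCstep i.val i.isLt
    simp only [Fin.eta] at hstep
    have hCj : C (i.val + 1) ≤ C j.val := hCmono _ _ hij
    have hheadj := hghead j (pos j v') (hpos_ge1 j v' hv') (hpos_le j v')
    rw [hposx j v'] at hheadj
    have hD1 : (2 : ℤ) ≤ (H.diam : ℤ) := by exact_mod_cast hD2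
    by_cases hb : pos i v = m i
    · have hlv : (T i).dist v (w i) = 1 := by
        rw [← hposx i v, hb]
        exact hxm i
      rw [hb, hlv]
      push_cast
      omega
    · have hbt : pos i v < m i := lt_of_le_of_ne (hpos_le i v) hb
      have htl := htail i (pos i v) hbt
      rw [hposx i v] at htl
      have hgm2 : g i (pos i v) ≤ g i (m i) :=
        hgmono i (pos i v) (m i) (hpos_le i v) (le_refl _)
      push_cast
      omega
  -- all pairs satisfy the radio condition for fz
  have hpair : ∀ z z' : W, z ≠ z' →
      (H.diam : ℤ) + 1 ≤ H.dist z z' + ((fz z' - fz z)).natAbs := by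
    intro z z' hne
    by_cases hz : z = w₀
    · subst hz
      obtain ⟨j, v', rfl⟩ := hcover' z'
      have hv' : v' ≠ w j := fun h => hne (by rw [h, hbase])
      have h1 := hcase_w0 j v' hv'
      have h2 := hfz_nn (φ j v')
      rw [hfzw0]
      omega
    · by_cases hz' : z' = w₀
      · subst hz'
        obtain ⟨j, v, rfl⟩ := hcover' z
        have hv : v ≠ w j := fun h => hz (by rw [h, hbase])
        have h1 := hcase_w0 j v hv
        have h2 := hfz_nn (φ j v)
        rw [hfzw0, SimpleGraph.dist_comm]
        omega
      · obtain ⟨i, v, rfl⟩ := hcover' z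
        obtain ⟨j, v', rfl⟩ := hcover' z'
        have hv : v ≠ w i := fun h => hz (by rw [h, hbase])
        have hv' : v' ≠ w j := fun h => hz' (by rw [h, hbase])
        by_cases hij : i = j
        · subst hij
          have hvv' : v ≠ v' := fun h => hne (by rw [h])
          have hposne : pos i v ≠ pos i v' := by
            intro h
            apply hvv'
            rw [← hposx i v, ← hposx i v', h]
          rcases Nat.lt_or_ge (pos i v) (pos i v') with h | h
          · have := hcase_same i v v' hv hv' h
            omega
          · have := hcase_same i v' v hv' hv (by omega)
            rw [SimpleGraph.dist_comm] at this
            omega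
        · rcases Nat.lt_or_ge i.val j.val with h | h
          · have := hcase_cross i j v v' h hv hv'
            omega
          · have hji : j.val < i.val := by
              have : i.val ≠ j.val := fun hh => hij (Fin.ext hh)
              omega
            have := hcase_cross j i v' v hji hv' hv
            rw [SimpleGraph.dist_comm] at this
            omega
  -- the radio labeling of H
  set fH : W → ℕ := fun z => (fz z).toNat with hfHdef
  have hfHz : ∀ z, (fH z : ℤ) = fz z := fun z => Int.toNat_of_nonneg (hfz_nn z)
  have hfHradio : IsRadioLabeling H fH := by
    intro u v huv
    have h1 := hpair v u (fun h => huv h.symm)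
    rw [SimpleGraph.dist_comm] at h1
    rw [hfHz, hfHz]
    omega
  have hspanle : span fH ≤ (C k + 1).toNat := by
    apply span_le
    intro u v
    have h1 := hfz_nn u
    have h2 := hfz_nn v
    have h3 := hfz_le u
    have h4 := hfz_le v
    rw [hfHz, hfHz]
    omega
  have hrnle : (radioNumber H : ℤ) ≤ C k + 1 := by
    have h1 := radioNumber_le_span hfHradio
    have h3 : 0 ≤ C k + 1 := by have := hCnn k; omega
    omega
  -- evaluating C k + 1
  have hmz : ∀ p : Fin k, (m p : ℤ) = (Fintype.card (V p) : ℤ) - 1 := by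
    intro p
    have := hmn p
    omega
  have h3' : ∑ p : Fin k, ((Fintype.card (V p) : ℤ) - 1) = (Fintype.card W : ℤ) - 1 := by
    rw [hcard]
    ring
  have hCk : C k + 1 = ((Fintype.card W : ℤ) - 1) * ((H.diam : ℤ) + 1)
      - 2 * (∑ u : W, (H.dist u w₀ : ℤ)) + 1 := by
    have h1 : C k = ∑ p : Fin k, (g p (m p) - 1) := by
      simp only [hC]
      rw [← Fin.sum_univ_eq_sum_range
        (fun p => if h : p < k then g ⟨p, h⟩ (m ⟨p, h⟩) - 1 else 0) k]
      apply Finset.sum_congr rfl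
      intro p _
      rw [dif_pos p.isLt]
    have h2 : ∑ p : Fin k, (g p (m p) - 1)
        = ((Fintype.card W : ℤ) - 1) * ((H.diam : ℤ) + 1)
          - 2 * (∑ p : Fin k, ∑ b : V p, ((T p).dist b (w p) : ℤ)) - k + k := by
      rw [Finset.sum_congr rfl (fun p _ => by rw [hgm_eval p, hmz p])]
      rw [Finset.sum_sub_distrib, Finset.sum_add_distrib, Finset.sum_sub_distrib,
        ← Finset.sum_mul, ← Finset.mul_sum, Finset.sum_const, Finset.card_univ,
        Fintype.card_fin, nsmul_eq_mul, mul_one, h3']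
      ring
    rw [h1, h2, ← hLsum]
    ring
  have hlb := radio_lower_bound hconnH w₀ hNW2
  have hrneq : (radioNumber H : ℤ) = C k + 1 := by
    refine le_antisymm hrnle ?_
    rw [hCk]
    exact hlb
  constructor
  · rw [hrneq, hCk, hepsH, htotH]
    push_cast
    ring
  · rw [hrneq, hCk]
    have hsummand : ∀ i : Fin k, (radioNumber (T i) : ℤ)
        + ((Fintype.card (V i) : ℤ) - 1) * ((H.diam : ℤ) - (T i).diam)
        = ((Fintype.card (V i) : ℤ) - 1) * ((H.diam : ℤ) + 1)
          - 2 * (∑ u : V i, ((T i).dist u (w i) : ℤ)) + 1 := by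
      intro i
      rw [hrnT i]
      ring
    rw [Finset.sum_congr rfl (fun i _ => hsummand i)]
    rw [Finset.sum_add_distrib, Finset.sum_sub_distrib, ← Finset.sum_mul, ← Finset.mul_sum,
      Finset.sum_const, Finset.card_univ, Fintype.card_fin, nsmul_eq_mul, mul_one, h3',
      ← hLsum]
    ring

end Radio
end

section
/- Let T be a tree of order n_0 with a chosen weight center, and let T_{D_k} be the tree obtained by taking 2k copies of T and identifying the weight center of each copy with a distinct leaf of a k-double star whose two central vertices are w and w'. Then T_{D_k} has exactly two weight centers, namely the adjacent vertices w and w' (so W(T_{D_k}) = {w, w'}), and |V(T_{D_k})| = 2(k n_0 + 1). -/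
namespace Radio

variable {V : Type*}

section DoubleStarAux
open scoped Classical

variable {Y : Type*} {k : ℕ}

def bse (c c' : Y) : Fin k ⊕ Fin k → Y := Sum.elim (fun _ => c) (fun _ => c')

@[simp] lemma bse_inl (c c' : Y) (i : Fin k) : bse c c' (Sum.inl i) = c := by simp [bse]
@[simp] lemma bse_inr (c c' : Y) (i : Fin k) : bse c c' (Sum.inr i) = c' := by simp [bse]

noncomputable def dec (φ : Fin k ⊕ Fin k → V → Y) (x : Y) : Option ((Fin k ⊕ Fin k) × V) :=
  @dite _ (∃ p : (Fin k ⊕ Fin k) × V, φ p.1 p.2 = x) (Classical.dec _)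
    (fun h => some h.choose) (fun _ => none)

variable {T : SimpleGraph V} {w : V} {c c' : Y} {φ : Fin k ⊕ Fin k → V → Y}

lemma dec_phi (hinj : ∀ i, Function.Injective (φ i))
    (hdisj : ∀ i j, i ≠ j → ∀ a b, φ i a ≠ φ j b) (i : Fin k ⊕ Fin k) (v : V) :
    dec φ (φ i v) = some (i, v) := by
  have h : ∃ p : (Fin k ⊕ Fin k) × V, φ p.1 p.2 = φ i v := ⟨(i, v), rfl⟩
  rw [dec, dif_pos h]
  have hs := h.choose_spec
  by_cases hji : h.choose.1 = i
  · rw [hji] at hs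
    have h2 : h.choose.2 = v := hinj i hs
    simp [Prod.ext_iff, hji, h2]
  · exact absurd hs (hdisj _ _ hji _ _)

lemma dec_none {x : Y} (hx : ∀ i v, φ i v ≠ x) : dec φ x = none := by
  rw [dec, dif_neg]
  rintro ⟨p, hp⟩
  exact hx p.1 p.2 hp

noncomputable def DD (T : SimpleGraph V) (w : V) (c c' : Y)
    (φ : Fin k ⊕ Fin k → V → Y) (x y : Y) : ℕ :=
  match dec φ x, dec φ y with
  | some (i, a), some (j, b) =>
      if i = j then T.dist a b
      else T.dist a w + T.dist w b + (if bse c c' i = bse c c' j then 2 else 3)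
  | some (i, a), none => T.dist a w + 1 + (if bse c c' i = y then 0 else 1)
  | none, some (j, b) => T.dist w b + 1 + (if bse c c' j = x then 0 else 1)
  | none, none => if x = y then 0 else 1

variable (T w c c')

lemma DD_pp (hinj : ∀ i, Function.Injective (φ i))
    (hdisj : ∀ i j, i ≠ j → ∀ a b, φ i a ≠ φ j b) (i j : Fin k ⊕ Fin k) (a b : V) :
    DD T w c c' φ (φ i a) (φ j b) =
      if i = j then T.dist a b
      else T.dist a w + T.dist w b + (if bse c c' i = bse c c' j then 2 else 3) := by
  rw [DD, dec_phi hinj hdisj, dec_phi hinj hdisj]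

lemma DD_pn (hinj : ∀ i, Function.Injective (φ i))
    (hdisj : ∀ i j, i ≠ j → ∀ a b, φ i a ≠ φ j b) {y : Y} (hy : ∀ i v, φ i v ≠ y)
    (i : Fin k ⊕ Fin k) (a : V) :
    DD T w c c' φ (φ i a) y = T.dist a w + 1 + (if bse c c' i = y then 0 else 1) := by
  rw [DD, dec_phi hinj hdisj, dec_none hy]

lemma DD_np (hinj : ∀ i, Function.Injective (φ i))
    (hdisj : ∀ i j, i ≠ j → ∀ a b, φ i a ≠ φ j b) {x : Y} (hx : ∀ i v, φ i v ≠ x)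
    (j : Fin k ⊕ Fin k) (b : V) :
    DD T w c c' φ x (φ j b) = T.dist w b + 1 + (if bse c c' j = x then 0 else 1) := by
  rw [DD, dec_none hx, dec_phi hinj hdisj]

lemma DD_nn {x y : Y} (hx : ∀ i v, φ i v ≠ x) (hy : ∀ i v, φ i v ≠ y) :
    DD T w c c' φ x y = if x = y then 0 else 1 := by
  rw [DD, dec_none hx, dec_none hy]

lemma DD_self (x : Y) : DD T w c c' φ x x = 0 := by
  rw [DD]
  rcases hx : dec φ x with _ | ⟨i, a⟩ <;> simp [hx]

lemma DD_symm (x y : Y) : DD T w c c' φ x y = DD T w c c' φ y x := by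
  rw [DD, DD]
  rcases hx : dec φ x with _ | ⟨i, a⟩ <;> rcases hy : dec φ y with _ | ⟨j, b⟩ <;>
      simp only [hx, hy]
  · simp [eq_comm]
  · simp [SimpleGraph.dist_comm]
  · simp [SimpleGraph.dist_comm]
  · by_cases hij : i = j
    · subst hij; simp [SimpleGraph.dist_comm]
    · rw [if_neg hij, if_neg (Ne.symm hij)]
      by_cases hb : bse c c' i = bse c c' j
      · rw [if_pos hb, if_pos hb.symm, SimpleGraph.dist_comm (u := a) (v := w),
          SimpleGraph.dist_comm (u := w) (v := b)]
        omega
      · rw [if_neg hb, if_neg (Ne.symm hb), SimpleGraph.dist_comm (u := a) (v := w),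
          SimpleGraph.dist_comm (u := w) (v := b)]
        omega

end DoubleStarAux

/-- Let `T` be a tree of order `n₀` with a chosen weight center `w`, and
let `H = T_{D_k}` be the tree obtained by taking `2k` copies of `T` (indexed by
`Fin k ⊕ Fin k`) and identifying the weight center `w` of each copy with a distinct leaf
of a `k`-double star with adjacent central vertices `c, c'` (described here by injections
`φ i : T → H` with pairwise disjoint images avoiding `c, c'` which together with `c, c'`
cover `H`; the edges of `H` are the copies of the edges of `T`, the central edge
`c — c'`, and the pendant edges `c — φ (inl i) w` and `c' — φ (inr i) w`). Then `H` has
exactly the two adjacent weight centers `c` and `c'`, i.e. `W(H) = {c, c'}` with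
`c` adjacent to `c'`, and `|V(H)| = 2 (k n₀ + 1)`. -/
theorem weightCenters_doubleStar_glue {V : Type*} [Fintype V]
    (T : SimpleGraph V) (w : V)
    (hTree : T.IsTree)
    (hw : w ∈ weightCenters T)
    {k : ℕ} (hk : 1 ≤ k)
    {W : Type*} [Fintype W]
    (H : SimpleGraph W) (c c' : W) (hcc' : c ≠ c') (φ : Fin k ⊕ Fin k → V → W)
    (hinj : ∀ i, Function.Injective (φ i))
    (hc : ∀ i v, φ i v ≠ c ∧ φ i v ≠ c')
    (hdisj : ∀ i j, i ≠ j → ∀ a b, φ i a ≠ φ j b)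
    (hcover : ∀ x : W, x = c ∨ x = c' ∨ ∃ i v, φ i v = x)
    (hAdj : ∀ x y : W, H.Adj x y ↔
      (∃ i a b, φ i a = x ∧ φ i b = y ∧ T.Adj a b) ∨
      ((x = c ∧ y = c') ∨ (x = c' ∧ y = c)) ∨
      (∃ i : Fin k, (x = c ∧ y = φ (Sum.inl i) w) ∨ (x = φ (Sum.inl i) w ∧ y = c)) ∨
      (∃ i : Fin k, (x = c' ∧ y = φ (Sum.inr i) w) ∨ (x = φ (Sum.inr i) w ∧ y = c'))) :
    weightCenters H = {c, c'} ∧ H.Adj c c' ∧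
    Fintype.card W = 2 * (k * Fintype.card V + 1) := by
  classical
  have hncc : ∀ i v, φ i v ≠ c := fun i v => (hc i v).1
  have hncc' : ∀ i v, φ i v ≠ c' := fun i v => (hc i v).2
  have hTc : T.Connected := hTree.isConnected
  have htri : ∀ a b u : V, T.Adj a b → T.dist u b ≤ T.dist u a + 1 := by
    intro a b u hab
    have h1 : T.dist a b ≤ 1 := by
      simpa using SimpleGraph.dist_le hab.toWalk
    have h2 := hTc.dist_triangle (u := u) (v := a) (w := b)
    omega
  have e1walk : ∀ (i : Fin k ⊕ Fin k) (a b : V),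
      ∃ p : H.Walk (φ i a) (φ i b), p.length = T.dist a b := by
    intro i a b
    obtain ⟨p, hp⟩ := hTc.exists_walk_length_eq_dist a b
    refine ⟨p.map ⟨φ i, fun {x y} hxy => (hAdj _ _).2 (Or.inl ⟨i, x, y, rfl, rfl, hxy⟩)⟩, ?_⟩
    rw [SimpleGraph.Walk.length_map, hp]
  have adjC : H.Adj c c' := (hAdj _ _).2 (Or.inr (Or.inl (Or.inl ⟨rfl, rfl⟩)))
  have adjP : ∀ i, H.Adj (bse c c' i) (φ i w) := by
    rintro (i | i)
    · exact (hAdj _ _).2 (Or.inr (Or.inr (Or.inl ⟨i, Or.inl ⟨rfl, rfl⟩⟩)))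
    · exact (hAdj _ _).2 (Or.inr (Or.inr (Or.inr ⟨i, Or.inl ⟨rfl, rfl⟩⟩)))
  have e1 : ∀ (i : Fin k ⊕ Fin k) (a b : V), H.dist (φ i a) (φ i b) ≤ T.dist a b := by
    intro i a b
    obtain ⟨p, hp⟩ := e1walk i a b
    rw [← hp]
    exact SimpleGraph.dist_le p
  have hreach : ∀ x : W, H.Reachable c x := by
    intro x
    rcases hcover x with rfl | rfl | ⟨i, v, rfl⟩
    · exact SimpleGraph.Reachable.refl _
    · exact ⟨adjC.toWalk⟩
    · have r1 : H.Reachable c (bse c c' i) := by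
        rcases i with i | i
        · exact SimpleGraph.Reachable.refl _
        · exact ⟨adjC.toWalk⟩
      have r2 : H.Reachable (bse c c' i) (φ i w) := ⟨(adjP i).toWalk⟩
      have r3 : H.Reachable (φ i w) (φ i v) := by
        obtain ⟨p, _⟩ := e1walk i w v
        exact ⟨p⟩
      exact (r1.trans r2).trans r3
  have hHconn : H.Connected := by
    haveI : Nonempty W := ⟨c⟩
    exact SimpleGraph.Connected.mk (fun x y => (hreach x).symm.trans (hreach y))
  have tri : ∀ x y z : W, H.dist x z ≤ H.dist x y + H.dist y z := fun x y z =>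
    hHconn.dist_triangle
  have ecc : ∀ x y : W, (x = c ∨ x = c') → (y = c ∨ y = c') →
      H.dist x y ≤ if x = y then 0 else 1 := by
    rintro x y (rfl | rfl) (rfl | rfl)
    · simp [SimpleGraph.dist_self]
    · rw [if_neg hcc']; simpa using SimpleGraph.dist_le adjC.toWalk
    · rw [if_neg (Ne.symm hcc')]; simpa using SimpleGraph.dist_le adjC.symm.toWalk
    · simp [SimpleGraph.dist_self]
  have hbse : ∀ i : Fin k ⊕ Fin k, bse c c' i = c ∨ bse c c' i = c' := by
    rintro (i | i) <;> simp
  have ebs : ∀ i j : Fin k ⊕ Fin k, H.dist (bse c c' i) (bse c c' j) ≤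
      if bse c c' i = bse c c' j then 0 else 1 := fun i j => ecc _ _ (hbse i) (hbse j)
  have epend : ∀ i, H.dist (φ i w) (bse c c' i) ≤ 1 := fun i => by
    simpa using SimpleGraph.dist_le (adjP i).symm.toWalk
  have dpc : ∀ (i : Fin k ⊕ Fin k) (a : V),
      H.dist (φ i a) (bse c c' i) ≤ T.dist a w + 1 := by
    intro i a
    have t := tri (φ i a) (φ i w) (bse c c' i)
    have h1 := e1 i a w
    have h2 := epend i
    omega
  have dpcc : ∀ (i : Fin k ⊕ Fin k) (a : V) (x : W), (x = c ∨ x = c') →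
      H.dist (φ i a) x ≤ T.dist a w + 1 + (if bse c c' i = x then 0 else 1) := by
    intro i a x hx
    have t := tri (φ i a) (bse c c' i) x
    have h1 := dpc i a
    have h2 := ecc (bse c c' i) x (hbse i) hx
    split_ifs at * <;> omega
  -- upper bound : dist ≤ DD
  have upper : ∀ x y : W, H.dist x y ≤ DD T w c c' φ x y := by
    intro x y
    rcases hcover x with hx | hx | ⟨i, a, hx⟩ <;> subst x <;>
      rcases hcover y with hy | hy | ⟨j, b, hy⟩ <;> subst y
    · simp [DD_self, SimpleGraph.dist_self]
    · rw [DD_nn T w c c' hncc hncc', if_neg hcc']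
      simpa using SimpleGraph.dist_le adjC.toWalk
    · rw [DD_np T w c c' hinj hdisj hncc]
      have h1 := dpcc j b c (Or.inl rfl)
      have h2 : H.dist c (φ j b) = H.dist (φ j b) c := SimpleGraph.dist_comm
      have h3 : T.dist b w = T.dist w b := SimpleGraph.dist_comm
      split_ifs at * <;> omega
    · rw [DD_nn T w c c' hncc' hncc, if_neg (Ne.symm hcc')]
      simpa using SimpleGraph.dist_le adjC.symm.toWalk
    · simp [DD_self, SimpleGraph.dist_self]
    · rw [DD_np T w c c' hinj hdisj hncc']
      have h1 := dpcc j b c' (Or.inr rfl)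
      have h2 : H.dist c' (φ j b) = H.dist (φ j b) c' := SimpleGraph.dist_comm
      have h3 : T.dist b w = T.dist w b := SimpleGraph.dist_comm
      split_ifs at * <;> omega
    · rw [DD_pn T w c c' hinj hdisj hncc]
      exact dpcc i a c (Or.inl rfl)
    · rw [DD_pn T w c c' hinj hdisj hncc']
      exact dpcc i a c' (Or.inr rfl)
    · rw [DD_pp T w c c' hinj hdisj]
      by_cases hij : i = j
      · subst hij; rw [if_pos rfl]; exact e1 i a b
      · rw [if_neg hij]
        have t1 := tri (φ i a) (bse c c' i) (φ j b)
        have t2 := tri (bse c c' i) (bse c c' j) (φ j b)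
        have h1 := dpc i a
        have h2 := ebs i j
        have h3 : H.dist (bse c c' j) (φ j b) ≤ T.dist w b + 1 := by
          have := dpc j b
          have hcm : H.dist (φ j b) (bse c c' j) = H.dist (bse c c' j) (φ j b) :=
            SimpleGraph.dist_comm
          have hdm : T.dist b w = T.dist w b := SimpleGraph.dist_comm
          omega
        split_ifs at * <;> omega
  -- Lipschitz property of DD
  have lip : ∀ x y z : W, H.Adj y z →
      DD T w c c' φ x z ≤ DD T w c c' φ x y + 1 := by
    intro x y z hyz
    have hdww : T.dist w w = 0 := SimpleGraph.dist_self
    rcases (hAdj y z).1 hyz with ⟨m, a, b, rfl, rfl, hab⟩ |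
      (⟨hy, hz⟩ | ⟨hy, hz⟩) | ⟨m, ⟨hy, hz⟩ | ⟨hy, hz⟩⟩ |
      ⟨m, ⟨hy, hz⟩ | ⟨hy, hz⟩⟩
    -- edge inside a copy
    · rcases hcover x with hx | hx | ⟨i, u, hx⟩ <;> subst x
      · rw [DD_np T w c c' hinj hdisj hncc, DD_np T w c c' hinj hdisj hncc]
        have := htri a b w hab
        split_ifs <;> omega
      · rw [DD_np T w c c' hinj hdisj hncc', DD_np T w c c' hinj hdisj hncc']
        have := htri a b w hab
        split_ifs <;> omega
      · rw [DD_pp T w c c' hinj hdisj, DD_pp T w c c' hinj hdisj]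
        by_cases him : i = m
        · subst him; rw [if_pos rfl, if_pos rfl]
          have := htri a b u hab
          omega
        · rw [if_neg him, if_neg him]
          have := htri a b w hab
          split_ifs <;> omega
    -- edge c c'
    · subst y; subst z
      rcases hcover x with hx | hx | ⟨i, u, hx⟩ <;> subst x
      · rw [DD_nn T w c c' hncc hncc', DD_self, if_neg hcc']
      · rw [DD_self]; omega
      · rw [DD_pn T w c c' hinj hdisj hncc', DD_pn T w c c' hinj hdisj hncc]
        split_ifs <;> omega
    -- edge c' c
    · subst y; subst z
      rcases hcover x with hx | hx | ⟨i, u, hx⟩ <;> subst x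
      · rw [DD_self]; omega
      · rw [DD_nn T w c c' hncc' hncc, DD_self, if_neg (Ne.symm hcc')]
      · rw [DD_pn T w c c' hinj hdisj hncc, DD_pn T w c c' hinj hdisj hncc']
        split_ifs <;> omega
    -- pendant edge c — φ (inl m) w
    · subst y; subst z
      rcases hcover x with hx | hx | ⟨i, u, hx⟩ <;> subst x
      · rw [DD_np T w c c' hinj hdisj hncc, DD_self]
        simp [hdww]
      · rw [DD_np T w c c' hinj hdisj hncc', DD_nn T w c c' hncc' hncc,
          if_neg (Ne.symm hcc')]
        simp only [bse_inl, hdww]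
        split_ifs <;> omega
      · rw [DD_pp T w c c' hinj hdisj, DD_pn T w c c' hinj hdisj hncc]
        by_cases him : i = Sum.inl m
        · subst him; rw [if_pos rfl]
          simp only [bse_inl]
          split_ifs <;> first | omega | exact absurd rfl (by assumption)
        · rw [if_neg him]
          simp only [bse_inl, hdww]
          split_ifs <;> omega
    -- pendant edge φ (inl m) w — c
    · subst y; subst z
      rcases hcover x with hx | hx | ⟨i, u, hx⟩ <;> subst x
      · rw [DD_self]; omega
      · rw [DD_nn T w c c' hncc' hncc, DD_np T w c c' hinj hdisj hncc',
          if_neg (Ne.symm hcc')]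
        split_ifs <;> omega
      · rw [DD_pn T w c c' hinj hdisj hncc, DD_pp T w c c' hinj hdisj]
        by_cases him : i = Sum.inl m
        · subst him
          simp only [bse_inl]
          split_ifs <;> first | omega | exact absurd rfl (by assumption)
        · rw [if_neg him]
          simp only [bse_inl, hdww]
          split_ifs <;> omega
    -- pendant edge c' — φ (inr m) w
    · subst y; subst z
      rcases hcover x with hx | hx | ⟨i, u, hx⟩ <;> subst x
      · rw [DD_np T w c c' hinj hdisj hncc, DD_nn T w c c' hncc hncc',
          if_neg hcc']
        simp only [bse_inr, hdww]
        split_ifs <;> omega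
      · rw [DD_np T w c c' hinj hdisj hncc', DD_self]
        simp [hdww]
      · rw [DD_pp T w c c' hinj hdisj, DD_pn T w c c' hinj hdisj hncc']
        by_cases him : i = Sum.inr m
        · subst him; rw [if_pos rfl]
          simp only [bse_inr]
          split_ifs <;> first | omega | exact absurd rfl (by assumption)
        · rw [if_neg him]
          simp only [bse_inr, hdww]
          split_ifs <;> omega
    -- pendant edge φ (inr m) w — c'
    · subst y; subst z
      rcases hcover x with hx | hx | ⟨i, u, hx⟩ <;> subst x
      · rw [DD_nn T w c c' hncc hncc', DD_np T w c c' hinj hdisj hncc,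
          if_neg hcc']
        split_ifs <;> omega
      · rw [DD_self]; omega
      · rw [DD_pn T w c c' hinj hdisj hncc', DD_pp T w c c' hinj hdisj]
        by_cases him : i = Sum.inr m
        · subst him
          simp only [bse_inr]
          split_ifs <;> first | omega | exact absurd rfl (by assumption)
        · rw [if_neg him]
          simp only [bse_inr, hdww]
          split_ifs <;> omega
  -- lower bound via walks
  have lower : ∀ (x y : W) (p : H.Walk x y), DD T w c c' φ x y ≤ p.length := by
    intro x y p
    induction p with
    | nil => simp [DD_self]
    | @cons u v y h q ih =>
      have h1 : DD T w c c' φ u y ≤ DD T w c c' φ v y + 1 := by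
        rw [DD_symm T w c c' u y, DD_symm T w c c' v y]
        exact lip y v u h.symm
      simp only [SimpleGraph.Walk.length_cons]
      omega
  have hdist : ∀ x y : W, H.dist x y = DD T w c c' φ x y := by
    intro x y
    refine le_antisymm (upper x y) ?_
    obtain ⟨p, hp⟩ := ((hreach x).symm.trans (hreach y)).exists_walk_length_eq_dist
    rw [← hp]
    exact lower x y p
  -- the bijection with the disjoint-union description of `W`
  have hbij : Function.Bijective
      (Sum.elim (fun p : (Fin k ⊕ Fin k) × V => φ p.1 p.2)
        (fun b : Bool => bif b then c else c') : ((Fin k ⊕ Fin k) × V) ⊕ Bool → W) := by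
    constructor
    · rintro (⟨i, a⟩ | b1) (⟨j, b⟩ | b2) h
      · simp only [Sum.elim_inl] at h
        by_cases hij : i = j
        · subst hij
          have hab := hinj i h
          subst hab
          rfl
        · exact absurd h (hdisj i j hij a b)
      · exfalso
        cases b2 <;>
          simp only [Sum.elim_inl, Sum.elim_inr, Bool.cond_false, Bool.cond_true] at h
        · exact hncc' i a h
        · exact hncc i a h
      · exfalso
        cases b1 <;>
          simp only [Sum.elim_inl, Sum.elim_inr, Bool.cond_false, Bool.cond_true] at h
        · exact hncc' j b h.symm
        · exact hncc j b h.symm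
      · cases b1 <;> cases b2 <;>
          simp only [Sum.elim_inr, Bool.cond_false, Bool.cond_true] at h
        · rfl
        · exact absurd h.symm hcc'
        · exact absurd h hcc'
        · rfl
    · intro x
      rcases hcover x with hx | hx | ⟨i, v, hx⟩
      · exact ⟨Sum.inr true, hx.symm⟩
      · exact ⟨Sum.inr false, hx.symm⟩
      · exact ⟨Sum.inl (i, v), hx⟩
  have hcard : Fintype.card W = 2 * (k * Fintype.card V + 1) := by
    rw [← Fintype.card_congr (Equiv.ofBijective _ hbij)]
    simp only [Fintype.card_sum, Fintype.card_prod, Fintype.card_bool, Fintype.card_fin]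
    ring
  have hsumW : ∀ f : W → ℕ, ∑ x : W, f x
      = (∑ p : (Fin k ⊕ Fin k) × V, f (φ p.1 p.2)) + (f c + f c') := by
    intro f
    rw [← Equiv.sum_comp (Equiv.ofBijective _ hbij) f, Fintype.sum_sum_type,
      Fintype.sum_bool]
    rfl
  set N := Fintype.card V with hN
  set S := ∑ v : V, T.dist v w with hSdef
  have hS_le : ∀ u : V, S ≤ ∑ v : V, T.dist v u := fun u => hw u
  have wCc : ∀ y0 : W, y0 = c ∨ y0 = c' →
      weightFrom H y0 = k * (S + N * 1) + k * (S + N * 2) + 1 := by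
    intro y0 hy0
    have hy0ne : ∀ i v, φ i v ≠ y0 := by
      rcases hy0 with h | h <;> subst y0
      · exact hncc
      · exact hncc'
    have h0 : weightFrom H y0 = ∑ x : W, DD T w c c' φ x y0 :=
      Finset.sum_congr rfl fun x _ => hdist x y0
    rw [h0, hsumW]
    have hends : DD T w c c' φ c y0 + DD T w c c' φ c' y0 = 1 := by
      rcases hy0 with h | h <;> subst y0
      · rw [DD_self, DD_nn T w c c' hncc' hncc, if_neg (Ne.symm hcc')]
      · rw [DD_nn T w c c' hncc hncc', if_neg hcc', DD_self]
    have hinner : ∀ j : Fin k ⊕ Fin k, ∑ v : V, DD T w c c' φ (φ j v) y0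
        = S + N * (if bse c c' j = y0 then 1 else 2) := by
      intro j
      have hv : ∀ v : V, DD T w c c' φ (φ j v) y0
          = T.dist v w + (if bse c c' j = y0 then 1 else 2) := by
        intro v
        rw [DD_pn T w c c' hinj hdisj hy0ne]
        split_ifs <;> omega
      rw [Finset.sum_congr rfl fun v _ => hv v, Finset.sum_add_distrib,
        Finset.sum_const, Finset.card_univ, smul_eq_mul, ← hSdef, ← hN]
    rw [Fintype.sum_prod_type, Finset.sum_congr rfl fun j _ => hinner j,
      Fintype.sum_sum_type, hends]
    rcases hy0 with h | h <;> subst y0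
    · simp only [bse_inl, bse_inr, eq_self_iff_true, if_true, if_neg (Ne.symm hcc'),
        Finset.sum_const, Finset.card_univ, Fintype.card_fin, smul_eq_mul]
    · simp only [bse_inl, bse_inr, eq_self_iff_true, if_true, if_neg hcc',
        Finset.sum_const, Finset.card_univ, Fintype.card_fin, smul_eq_mul]
      ring
  have wCphi : ∀ (i : Fin k ⊕ Fin k) (u : V),
      k * (S + N * 1) + k * (S + N * 2) + 1 < weightFrom H (φ i u) := by
    intro i u
    set Su := ∑ v : V, T.dist v u with hSu
    set d := T.dist w u with hd
    have h0 : weightFrom H (φ i u) = ∑ x : W, DD T w c c' φ x (φ i u) :=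
      Finset.sum_congr rfl fun x _ => hdist x (φ i u)
    rw [h0, hsumW]
    have hends : DD T w c c' φ c (φ i u) + DD T w c c' φ c' (φ i u) = 2 * d + 3 := by
      rw [DD_np T w c c' hinj hdisj hncc, DD_np T w c c' hinj hdisj hncc']
      rcases i with i0 | i0 <;> simp only [bse_inl, bse_inr] <;> split_ifs <;>
        first
          | omega
          | exact absurd (by assumption : c = c') hcc'
          | exact absurd (by assumption : c' = c) (Ne.symm hcc')
          | exact absurd rfl (by assumption)
    have hinner : ∀ j : Fin k ⊕ Fin k, ∑ v : V, DD T w c c' φ (φ j v) (φ i u)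
        = if j = i then Su else
            (S + N * d) + N * (if bse c c' j = bse c c' i then 2 else 3) := by
      intro j
      by_cases hji : j = i
      · subst hji
        rw [if_pos rfl]
        exact Finset.sum_congr rfl fun v _ => by
          rw [DD_pp T w c c' hinj hdisj, if_pos rfl]
      · rw [if_neg hji]
        have hv : ∀ v : V, DD T w c c' φ (φ j v) (φ i u)
            = T.dist v w + (d + (if bse c c' j = bse c c' i then 2 else 3)) := by
          intro v
          rw [DD_pp T w c c' hinj hdisj, if_neg hji]
          split_ifs <;> omega
        rw [Finset.sum_congr rfl fun v _ => hv v, Finset.sum_add_distrib,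
          Finset.sum_const, Finset.card_univ, smul_eq_mul, ← hSdef, ← hN]
        split_ifs <;> ring
    rw [Fintype.sum_prod_type, Finset.sum_congr rfl fun j _ => hinner j, hends]
    rw [← Finset.add_sum_erase _ _ (Finset.mem_univ i), if_pos rfl]
    have herase : ∀ j ∈ Finset.univ.erase i,
        (if j = i then Su else
          (S + N * d) + N * (if bse c c' j = bse c c' i then 2 else 3))
        = (S + N * d) + N * (if bse c c' j = bse c c' i then 2 else 3) :=
      fun j hj => if_neg (Finset.ne_of_mem_erase hj)
    rw [Finset.sum_congr rfl herase, Finset.sum_add_distrib, Finset.sum_const,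
      ← Finset.mul_sum, Finset.card_erase_of_mem (Finset.mem_univ i),
      Finset.card_univ, smul_eq_mul]
    have hcardI : Fintype.card (Fin k ⊕ Fin k) = 2 * k := by
      rw [Fintype.card_sum, Fintype.card_fin]
      omega
    have hEsum : (∑ j ∈ Finset.univ.erase i,
        (if bse c c' j = bse c c' i then (2:ℕ) else 3)) = 5 * k - 2 := by
      have htot : (∑ j : Fin k ⊕ Fin k,
          (if bse c c' j = bse c c' i then (2:ℕ) else 3)) = 5 * k := by
        rw [Fintype.sum_sum_type]
        rcases i with i0 | i0 <;>
          simp only [bse_inl, bse_inr, eq_self_iff_true, if_true, if_neg hcc',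
            if_neg (Ne.symm hcc'), Finset.sum_const, Finset.card_univ,
            Fintype.card_fin, smul_eq_mul] <;>
          ring
      have hsplit := Finset.add_sum_erase Finset.univ
        (fun j => if bse c c' j = bse c c' i then (2:ℕ) else 3) (Finset.mem_univ i)
      simp only [eq_self_iff_true, if_true] at hsplit
      omega
    rw [hEsum, hcardI]
    have hNpos : 1 ≤ N := by
      rw [hN]
      exact @Fintype.card_pos V _ ⟨w⟩
    obtain ⟨m, rfl⟩ : ∃ m, k = m + 1 := ⟨k - 1, by omega⟩
    have h5 : 5 * (m + 1) - 2 = 5 * m + 3 := by omega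
    have h2k : 2 * (m + 1) - 1 = 2 * m + 1 := by omega
    rw [h5, h2k]
    have hSleu : S ≤ Su := by rw [hSu]; exact hS_le u
    nlinarith [hSleu, hNpos, Nat.zero_le (m * N * d), Nat.zero_le (N * d)]
  have hwcc' : weightFrom H c' = weightFrom H c := by
    rw [wCc c (Or.inl rfl), wCc c' (Or.inr rfl)]
  have hminc : ∀ x : W, weightFrom H c ≤ weightFrom H x := by
    intro x
    rcases hcover x with hx | hx | ⟨i, u, hx⟩ <;> subst x
    · exact le_rfl
    · rw [hwcc']
    · rw [wCc c (Or.inl rfl)]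
      exact (wCphi i u).le
  refine ⟨?_, adjC, hcard⟩
  ext x
  simp only [weightCenters, Set.mem_setOf_eq, Set.mem_insert_iff, Set.mem_singleton_iff]
  constructor
  · intro hx
    rcases hcover x with h1 | h1 | ⟨i, u, h1⟩
    · exact Or.inl h1
    · exact Or.inr h1
    · exfalso
      subst x
      have h2 := hx c
      rw [wCc c (Or.inl rfl)] at h2
      exact absurd h2 (not_le.mpr (wCphi i u))
  · rintro (rfl | rfl)
    · exact hminc
    · intro x0
      rw [hwcc']
      exact hminc x0


end Radio
end
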